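/- arXiv:1203.5685 — 3 statements merged into one kernel-verified Lean document; each statement's English description precedes it below -/
import Mathlib

section
/- Let V_c be the codimension-c star configuration determined by s hyperplanes in P^n meeting properly. Then the initial degree of I_{V_c} is α(I_{V_c}) = s−c+1, and I_{V_c} is generated by homogeneous elements of degree s−c+1 that are monomials in the linear forms L_i; precisely, I_{V_c} is generated by the products ∏_{i∈T} L_i taken over all subsets T ⊆ {1,…,s} with |T| = s−c+1. -/
open MvPolynomial

noncomputable section

def starIdeal {k : Type*} [Field k] {n s : ℕ} (L : Fin s → MvPolynomial (Fin (n + 1)) k)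
    (c : ℕ) : Ideal (MvPolynomial (Fin (n + 1)) k) :=
  ⨅ (T : Finset (Fin s)) (_ : T.card = c), Ideal.span (L '' ↑T)

def MeetProperly {k : Type*} [Field k] {n s : ℕ} (L : Fin s → MvPolynomial (Fin (n + 1)) k) : Prop :=
  (∀ i, (L i).IsHomogeneous 1) ∧
    ∀ T : Finset (Fin s), T.card ≤ min s (n + 1) →
      LinearIndependent k (fun i : T => L i)

/-- The initial degree of an ideal: the least degree of a nonzero homogeneous element. -/
def initialDegree {k : Type*} [Field k] {n : ℕ}
    (J : Ideal (MvPolynomial (Fin (n + 1)) k)) : ℕ :=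
  sInf {d : ℕ | ∃ f ∈ J, f ≠ 0 ∧ f.IsHomogeneous d}

namespace StarAux

variable {k : Type*} [Field k] {σ : Type*}

lemma hc_mul_expand (p q : MvPolynomial σ k) {e : ℕ} (hq : q.IsHomogeneous e) (d : ℕ) :
    homogeneousComponent d (p * q) =
      ∑ j ∈ Finset.range (p.totalDegree + 1),
        if d = j + e then homogeneousComponent j p * q else 0 := by
  conv_lhs => rw [← sum_homogeneousComponent p, Finset.sum_mul, map_sum]
  refine Finset.sum_congr rfl fun j _ => ?_
  exact homogeneousComponent_of_mem
    ((mem_homogeneousSubmodule _ _).mpr ((homogeneousComponent_isHomogeneous j p).mul hq))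

lemma hc_mul_lt {p q : MvPolynomial σ k} {e : ℕ} (hq : q.IsHomogeneous e) {d : ℕ}
    (hd : d < e) : homogeneousComponent d (p * q) = 0 := by
  rw [hc_mul_expand p q hq d]
  exact Finset.sum_eq_zero fun j _ => if_neg (by omega)

lemma hc_mul_add {p q : MvPolynomial σ k} {e : ℕ} (hq : q.IsHomogeneous e) (d : ℕ) :
    homogeneousComponent (d + e) (p * q) = homogeneousComponent d p * q := by
  rw [hc_mul_expand p q hq (d + e)]
  simp only [Nat.add_right_cancel_iff]
  rw [Finset.sum_ite_eq (Finset.range (p.totalDegree + 1)) d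
    (fun j => homogeneousComponent j p * q)]
  split
  · rfl
  · next h =>
    rw [homogeneousComponent_eq_zero, zero_mul]
    simp only [Finset.mem_range, not_lt] at h
    omega

lemma degree_eq_one (m : σ →₀ ℕ) (h : m.degree = 1) : ∃ j, m = Finsupp.single j 1 := by
  have hne : m.support.Nonempty := by
    rw [Finset.nonempty_iff_ne_empty]
    intro he
    rw [Finsupp.degree_apply, he, Finset.sum_empty] at h; omega
  obtain ⟨j, hj⟩ := hne
  refine ⟨j, ?_⟩
  have hj1 : 1 ≤ m j := Nat.one_le_iff_ne_zero.mpr (Finsupp.mem_support_iff.mp hj)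
  have hle : m j ≤ m.degree := Finset.single_le_sum (fun _ _ => Nat.zero_le _) hj
  ext i
  classical
  rcases eq_or_ne i j with rfl | hij
  · simp only [Finsupp.single_eq_same]; omega
  · rw [Finsupp.single_eq_of_ne' (Ne.symm hij)]
    by_contra hne0
    have hi : i ∈ m.support := Finsupp.mem_support_iff.mpr hne0
    have : m j + m i ≤ m.degree := by
      have h2 := Finset.add_sum_erase _ m hj
      rw [Finsupp.degree_apply, ← h2]
      have hi' : i ∈ m.support.erase j := Finset.mem_erase.mpr ⟨hij, hi⟩
      have := Finset.single_le_sum (f := m) (fun _ _ => Nat.zero_le _) hi'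
      omega
    omega

lemma mem_kspan_of_homog {e : ℕ} {S : Set (MvPolynomial σ k)} (hS : ∀ p ∈ S, p.IsHomogeneous e)
    {f : MvPolynomial σ k} (hf : f.IsHomogeneous e) (h : f ∈ Ideal.span S) :
    f ∈ Submodule.span k S := by
  rw [Ideal.span, Submodule.mem_span_set] at h
  obtain ⟨c, hsupp, hsum⟩ := h
  have hf' : f = homogeneousComponent e f :=
    ((homogeneousComponent_of_mem ((mem_homogeneousSubmodule _ _).mpr hf)).trans
      (if_pos rfl)).symm
  rw [hf', ← hsum, Finsupp.sum, map_sum]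
  refine Submodule.sum_mem _ fun p hp => ?_
  have hp' : p ∈ S := hsupp hp
  have h2 := hc_mul_add (p := c p) (hS p hp') 0
  rw [zero_add] at h2
  rw [smul_eq_mul, h2, homogeneousComponent_zero, ← smul_eq_C_mul]
  exact Submodule.smul_mem _ _ (Submodule.subset_span hp')

lemma hc_eq_zero_of_mem_span {e : ℕ} {S : Set (MvPolynomial σ k)}
    (hS : ∀ p ∈ S, p.IsHomogeneous e) {f : MvPolynomial σ k} (h : f ∈ Ideal.span S) {d : ℕ}
    (hd : d < e) : homogeneousComponent d f = 0 := by
  rw [Ideal.span, Submodule.mem_span_set] at h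
  obtain ⟨c, hsupp, hsum⟩ := h
  rw [← hsum, Finsupp.sum, map_sum]
  refine Finset.sum_eq_zero fun p hp => ?_
  rw [smul_eq_mul]
  exact hc_mul_lt (hS p (hsupp hp)) hd

lemma findep_iff {ι : Type*} (v : ι → MvPolynomial σ k) (T : Finset ι) :
    LinearIndependent k (fun i : T => v i) ↔
      ∀ b : ι → k, ∑ i ∈ T, b i • v i = 0 → ∀ i ∈ T, b i = 0 := by
  rw [Fintype.linearIndependent_iff]
  constructor
  · intro H b hb i hi
    exact H (fun j => b j) (by rw [Finset.sum_coe_sort T (fun i => b i • v i)]; exact hb) ⟨i, hi⟩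
  · intro H b hb i
    classical
    set b' : ι → k := fun j => if h : j ∈ T then b ⟨j, h⟩ else 0 with hb'
    have hs : ∑ j ∈ T, b' j • v j = 0 := by
      rw [← Finset.sum_coe_sort T (fun j => b' j • v j), ← hb]
      exact Finset.sum_congr rfl fun j _ => by simp [hb', j.2]
    have := H b' hs i i.2
    simpa [hb', i.2] using this



lemma degree_single_one (j : σ) : (Finsupp.single j 1 : σ →₀ ℕ).degree = 1 := by
  classical
  rw [Finsupp.degree_apply, Finsupp.support_single_ne_zero _ one_ne_zero, Finset.sum_singleton,
    Finsupp.single_eq_same]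

section quot
variable [Fintype σ] [DecidableEq σ]

lemma homog1_repr {f : MvPolynomial σ k} (hf : f.IsHomogeneous 1) :
    f = ∑ j, C (coeff (Finsupp.single j 1) f) * X j := by
  apply MvPolynomial.ext
  intro m
  rw [coeff_sum]
  simp only [coeff_C_mul, coeff_X']
  rcases eq_or_ne m.degree 1 with hm | hm
  · obtain ⟨j0, rfl⟩ := degree_eq_one m hm
    rw [Finset.sum_eq_single j0]
    · rw [if_pos rfl, mul_one]
    · intro j _ hj
      rw [if_neg fun hc => hj ((Finsupp.single_left_inj one_ne_zero).mp hc), mul_zero]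
    · exact fun h => absurd (Finset.mem_univ j0) h
  · rw [hf.coeff_eq_zero hm]
    symm; apply Finset.sum_eq_zero; intro j _
    rw [if_neg fun hc => hm (by rw [← hc]; exact degree_single_one j), mul_zero]

lemma exists_coeffvec_ne_zero {g : MvPolynomial σ k} (hg1 : g.IsHomogeneous 1) (hg0 : g ≠ 0) :
    ∃ j₀, coeff (Finsupp.single j₀ 1) g ≠ 0 := by
  by_contra h
  push_neg at h
  apply hg0
  rw [homog1_repr hg1]
  simp [h]

theorem quot_one {g : MvPolynomial σ k} (hg1 : g.IsHomogeneous 1) (hg0 : g ≠ 0) :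
    ∃ (j₀ : σ) (π : MvPolynomial σ k →ₐ[k] MvPolynomial {j : σ // j ≠ j₀} k)
      (τ : MvPolynomial {j : σ // j ≠ j₀} k →ₐ[k] MvPolynomial σ k),
      (∀ y, π (τ y) = y) ∧ (∀ f, f - τ (π f) ∈ Ideal.span {g}) ∧ π g = 0 ∧
      (∀ (p : MvPolynomial σ k) (m : ℕ), p.IsHomogeneous m → (π p).IsHomogeneous m) := by
  set a : σ → k := fun j => coeff (Finsupp.single j 1) g with ha
  obtain ⟨j₀, hj₀⟩ := exists_coeffvec_ne_zero hg1 hg0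
  have hj₀' : a j₀ ≠ 0 := hj₀
  set S : MvPolynomial {j : σ // j ≠ j₀} k := ∑ j' : {j : σ // j ≠ j₀}, C (a j'.val) * X j'
    with hS
  set u : σ → MvPolynomial {j : σ // j ≠ j₀} k :=
    fun j => if h : j = j₀ then -C (a j₀)⁻¹ * S else X ⟨j, h⟩ with hu
  set π : MvPolynomial σ k →ₐ[k] MvPolynomial {j : σ // j ≠ j₀} k := aeval u with hπ
  set τ : MvPolynomial {j : σ // j ≠ j₀} k →ₐ[k] MvPolynomial σ k :=
    aeval (fun j' : {j : σ // j ≠ j₀} => (X j'.val : MvPolynomial σ k)) with hτ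
  have huj0 : u j₀ = -C (a j₀)⁻¹ * S := dif_pos rfl
  have huval : ∀ (j' : {j : σ // j ≠ j₀}), u j'.val = X j' := fun j' => dif_neg j'.2
  have hsplit : g = C (a j₀) * X j₀ + ∑ j' : {j : σ // j ≠ j₀}, C (a j'.val) * X j'.val := by
    conv_lhs => rw [homog1_repr hg1]
    rw [Fintype.sum_eq_add_sum_compl j₀ (fun j => C (a j) * X j)]
    congr 1
    rw [Finset.sum_subtype (p := fun j => j ≠ j₀) _ (fun x => by simp) (fun j => C (a j) * X j)]
  have hτS : τ S = ∑ j' : {j : σ // j ≠ j₀}, C (a j'.val) * X j'.val := by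
    rw [hS, map_sum]
    refine Finset.sum_congr rfl fun j' _ => ?_
    rw [map_mul, hτ, aeval_C, aeval_X, algebraMap_eq]
  have hπg : π g = 0 := by
    conv_lhs => rw [hsplit]
    rw [map_add, map_mul, map_sum, hπ, aeval_C, aeval_X, algebraMap_eq]
    have hterm : ∀ j' : {j : σ // j ≠ j₀},
        (aeval u) (C (a j'.val) * X j'.val) = C (a j'.val) * X j' := by
      intro j'
      rw [map_mul, aeval_C, aeval_X, huval, algebraMap_eq]
    rw [Finset.sum_congr rfl fun j' _ => hterm j', huj0, ← hS, ← mul_assoc, mul_neg, ← C_mul,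
      mul_inv_cancel₀ hj₀', C_1, neg_one_mul, neg_add_cancel]
  have hπτ : ∀ y, π (τ y) = y := by
    have hcomp : π.comp τ = AlgHom.id k _ := by
      apply MvPolynomial.algHom_ext
      intro j'
      rw [AlgHom.comp_apply, hτ, aeval_X, hπ, aeval_X, huval, AlgHom.id_apply]
    intro y
    simpa using congrFun (congrArg DFunLike.coe hcomp) y
  have hXdiff : ∀ j, (X j : MvPolynomial σ k) - τ (π (X j)) ∈ Ideal.span {g} := by
    intro j
    rw [hπ, aeval_X]
    by_cases h : j = j₀
    · rw [h, huj0]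
      have heq : X j₀ - τ (-C (a j₀)⁻¹ * S) = C (a j₀)⁻¹ * g := by
        rw [map_mul, map_neg, hτ, aeval_C, algebraMap_eq, ← hτ, hτS, hsplit, mul_add,
          ← mul_assoc, ← C_mul, inv_mul_cancel₀ hj₀', C_1, one_mul, neg_mul, sub_neg_eq_add]
      rw [heq]
      exact Ideal.mul_mem_left _ _ (Ideal.subset_span rfl)
    · have : u j = X ⟨j, h⟩ := dif_neg h
      rw [this, hτ, aeval_X]
      simp only [sub_self]
      exact Ideal.zero_mem _
  have hSh : S.IsHomogeneous 1 := by
    rw [hS]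
    exact IsHomogeneous.sum _ _ _ fun j' _ => by
      simpa using (isHomogeneous_C _ (a j'.val)).mul (isHomogeneous_X _ j')
  refine ⟨j₀, π, τ, hπτ, ?_, hπg, ?_⟩
  · intro f
    induction f using MvPolynomial.induction_on with
    | C b =>
      rw [hπ, aeval_C, AlgHom.commutes, algebraMap_eq]
      simp only [sub_self]
      exact Ideal.zero_mem _
    | add p q hp hq =>
      rw [map_add, map_add]
      have : p + q - (τ (π p) + τ (π q)) = (p - τ (π p)) + (q - τ (π q)) := by ring
      rw [this]
      exact Ideal.add_mem _ hp hq
    | mul_X p j hp =>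
      rw [map_mul, map_mul]
      have : p * X j - τ (π p) * τ (π (X j)) =
          (p - τ (π p)) * X j + τ (π p) * (X j - τ (π (X j))) := by ring
      rw [this]
      exact Ideal.add_mem _ (Ideal.mul_mem_right _ _ hp) (Ideal.mul_mem_left _ _ (hXdiff j))
  · intro p m hp
    have hv : ∀ j, (u j).IsHomogeneous 1 := by
      intro j
      by_cases h : j = j₀
      · rw [h, huj0]
        simpa using ((isHomogeneous_C _ ((a j₀)⁻¹)).neg.mul hSh)
      · rw [show u j = X ⟨j, h⟩ from dif_neg h]
        exact isHomogeneous_X _ _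
    have := hp.aeval u hv
    rwa [one_mul] at this


section pull
variable {R S : Type*} [CommRing R] [CommRing S] [Algebra k R] [Algebra k S]

lemma pull (π : R →ₐ[k] S) (τ : S →ₐ[k] R) {g : R}
    (hsec : ∀ f : R, f - τ (π f) ∈ Ideal.span {g}) (A : Set R) {f : R}
    (hf : π f ∈ Ideal.span (π '' A)) : f ∈ Ideal.span (A ∪ {g}) := by
  have h1 : τ (π f) ∈ Ideal.map τ (Ideal.span (π '' A)) := Ideal.mem_map_of_mem _ hf
  rw [Ideal.map_span] at h1
  have h2 : Ideal.span (↑τ '' (↑π '' A)) ≤ Ideal.span (A ∪ {g}) := by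
    rw [Ideal.span_le]
    rintro y ⟨x, ⟨p, hp, rfl⟩, rfl⟩
    have he : τ (π p) = p - (p - τ (π p)) := by ring
    rw [he]
    exact Ideal.sub_mem _ (Ideal.subset_span (Or.inl hp))
      (Ideal.span_mono Set.subset_union_right (hsec p))
  have h3 : f = (f - τ (π f)) + τ (π f) := by ring
  rw [h3]
  exact Ideal.add_mem _ (Ideal.span_mono Set.subset_union_right (hsec f)) (h2 h1)

lemma mem_span_of_map_eq_zero (π : R →ₐ[k] S) (τ : S →ₐ[k] R) {g : R}
    (hsec : ∀ f : R, f - τ (π f) ∈ Ideal.span {g}) {f : R} (hf : π f = 0) :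
    f ∈ Ideal.span {g} := by
  have := hsec f
  rwa [hf, map_zero, sub_zero] at this
end pull


theorem exists_quot (c : ℕ) :
    ∀ (σ : Type) [Fintype σ] [DecidableEq σ] (M : Fin c → MvPolynomial σ k),
    (∀ i, (M i).IsHomogeneous 1) →
    (∀ b : Fin c → k, ∑ i, b i • M i = 0 → ∀ i, b i = 0) →
    ∃ (σ' : Type) (_ : Fintype σ') (ρ : MvPolynomial σ k →ₐ[k] MvPolynomial σ' k),
      Function.Surjective ρ ∧ RingHom.ker ρ = Ideal.span (Set.range M) := by
  induction c with
  | zero =>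
    intro σ _ _ M hM hind
    refine ⟨σ, inferInstance, AlgHom.id k _, Function.surjective_id, ?_⟩
    rw [Set.range_eq_empty M, Ideal.span_empty]
    ext f
    simp [RingHom.mem_ker]
  | succ c ih =>
    intro σ _ _ M hM hind
    have hg0 : M 0 ≠ 0 := by
      intro h
      have hs : ∑ i, (Pi.single 0 1 : Fin (c + 1) → k) i • M i = 0 := by
        rw [Finset.sum_eq_single 0]
        · rw [Pi.single_eq_same, one_smul, h]
        · intro i _ hi
          rw [Pi.single_eq_of_ne hi, zero_smul]
        · exact fun h => absurd (Finset.mem_univ _) h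
      have := hind _ hs 0
      rw [Pi.single_eq_same] at this
      exact one_ne_zero this
    obtain ⟨j₀, π, τ, hπτ, hsec, hπg, hπhom⟩ := quot_one (hM 0) hg0
    set M' : Fin c → MvPolynomial {j : σ // j ≠ j₀} k := fun i => π (M i.succ) with hM'def
    have hM' : ∀ i, (M' i).IsHomogeneous 1 := fun i => hπhom _ _ (hM _)
    have hind' : ∀ b : Fin c → k, ∑ i, b i • M' i = 0 → ∀ i, b i = 0 := by
      intro b hb
      have hsum : π (∑ i, b i • M i.succ) = 0 := by
        rw [map_sum]
        simpa only [hM'def, map_smul] using hb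
      have hker : (∑ i, b i • M i.succ) ∈ Ideal.span {M 0} :=
        mem_span_of_map_eq_zero π τ hsec hsum
      have hhom : (∑ i, b i • M i.succ).IsHomogeneous 1 :=
        IsHomogeneous.sum _ _ _ fun i _ => by
          rw [smul_eq_C_mul]
          simpa using (isHomogeneous_C _ (b i)).mul (hM i.succ)
      have hspan := mem_kspan_of_homog
        (fun p hp => by rw [Set.mem_singleton_iff] at hp; rw [hp]; exact hM 0) hhom hker
      rw [Submodule.mem_span_singleton] at hspan
      obtain ⟨b', hb'⟩ := hspan
      set B : Fin (c+1) → k := Fin.cases (-b') b with hBdef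
      have hBsum : ∑ i, B i • M i = 0 := by
        rw [Fin.sum_univ_succ]
        simp only [hBdef, Fin.cases_zero, Fin.cases_succ]
        rw [← hb', neg_smul, neg_add_cancel]
      intro i
      have := hind B hBsum i.succ
      simpa [hBdef] using this
    obtain ⟨σ', instF, ρ', hsurj', hker'⟩ := ih _ M' hM' hind'
    refine ⟨σ', instF, ρ'.comp π, hsurj'.comp (fun y => ⟨τ y, hπτ y⟩), ?_⟩
    have hle : Ideal.span (Set.range M) ≤ RingHom.ker (ρ'.comp π) := by
      rw [Ideal.span_le]
      rintro x ⟨i, rfl⟩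
      rw [SetLike.mem_coe, RingHom.mem_ker, AlgHom.comp_apply]
      rcases Fin.eq_zero_or_eq_succ i with rfl | ⟨j, rfl⟩
      · rw [hπg, map_zero]
      · have : M' j ∈ RingHom.ker ρ' := by
          rw [hker']
          exact Ideal.subset_span ⟨j, rfl⟩
        rw [RingHom.mem_ker] at this
        exact this
    refine le_antisymm ?_ hle
    intro f hf
    rw [RingHom.mem_ker, AlgHom.comp_apply, ← RingHom.mem_ker, hker'] at hf
    have hr : Set.range M' = ↑π '' Set.range (fun i : Fin c => M i.succ) := by
      rw [← Set.range_comp]; rfl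
    rw [hr] at hf
    have hp := pull π τ hsec _ hf
    refine Ideal.span_mono ?_ hp
    rintro x (⟨i, rfl⟩ | rfl)
    · exact ⟨i.succ, rfl⟩
    · exact ⟨0, rfl⟩

theorem span_isPrime {σ : Type} [Fintype σ] [DecidableEq σ] {ι : Type*} [DecidableEq ι]
    (L : ι → MvPolynomial σ k) (T : Finset ι) (hL : ∀ i ∈ T, (L i).IsHomogeneous 1)
    (hind : ∀ b : ι → k, ∑ i ∈ T, b i • L i = 0 → ∀ i ∈ T, b i = 0) :
    (Ideal.span (L '' ↑T)).IsPrime := by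
  set e := T.equivFin with he
  set M : Fin T.card → MvPolynomial σ k := fun i => L (e.symm i).val with hM
  have hRange : Set.range M = L '' ↑T := by
    ext y
    constructor
    · rintro ⟨i, rfl⟩
      exact ⟨(e.symm i).val, (e.symm i).2, rfl⟩
    · rintro ⟨x, hx, rfl⟩
      exact ⟨e ⟨x, hx⟩, by simp [hM]⟩
  have hMh : ∀ i, (M i).IsHomogeneous 1 := fun i => hL _ (e.symm i).2
  have hMind : ∀ b : Fin T.card → k, ∑ i, b i • M i = 0 → ∀ i, b i = 0 := by
    intro b hb i
    set b' : ι → k := fun j => if h : j ∈ T then b (e ⟨j, h⟩) else 0 with hb'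
    have hsum : ∑ j ∈ T, b' j • L j = 0 := by
      rw [← Finset.sum_coe_sort T (fun j => b' j • L j)]
      rw [← Equiv.sum_comp e.symm (fun j : T => b' j.val • L j.val)]
      rw [← hb]
      refine Finset.sum_congr rfl fun i _ => ?_
      simp only [hb', dif_pos (e.symm i).2]
      congr 1
      · congr 1
        rw [show (⟨(e.symm i).val, (e.symm i).2⟩ : {x // x ∈ T}) = e.symm i from rfl,
          Equiv.apply_symm_apply]
    have h1 := hind b' hsum (e.symm i).val (e.symm i).2
    rw [hb'] at h1
    simp only [dif_pos (e.symm i).2] at h1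
    rwa [show (⟨(e.symm i).val, (e.symm i).2⟩ : {x // x ∈ T}) = e.symm i from rfl,
      Equiv.apply_symm_apply] at h1
  obtain ⟨σ', instF, ρ, hsurj, hker⟩ := exists_quot T.card σ M hMh hMind
  rw [← hRange, ← hker]
  exact RingHom.ker_isPrime _

lemma not_mem_span {σ : Type} [Fintype σ] [DecidableEq σ] {ι : Type*} [DecidableEq ι]
    (L : ι → MvPolynomial σ k) (T : Finset ι) {i₀ : ι} (hi : i₀ ∉ T)
    (hL : ∀ i ∈ insert i₀ T, (L i).IsHomogeneous 1)
    (hind : ∀ b : ι → k, ∑ j ∈ insert i₀ T, b j • L j = 0 → ∀ j ∈ insert i₀ T, b j = 0) :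
    L i₀ ∉ Ideal.span (L '' ↑T) := by
  intro hmem
  have h1 := mem_kspan_of_homog (S := L '' ↑T)
    (fun p hp => by obtain ⟨x, hx, rfl⟩ := hp; exact hL x (Finset.mem_insert_of_mem hx))
    (hL i₀ (Finset.mem_insert_self _ _)) hmem
  rw [Finsupp.mem_span_image_iff_linearCombination] at h1
  obtain ⟨l, hl, hsum⟩ := h1
  rw [Finsupp.mem_supported] at hl
  set b : ι → k := fun j => if j = i₀ then -1 else l j with hb
  have hbsum : ∑ j ∈ insert i₀ T, b j • L j = 0 := by
    rw [Finset.sum_insert hi]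
    have h2 : ∑ j ∈ T, b j • L j = ∑ j ∈ T, l j • L j :=
      Finset.sum_congr rfl fun j hj => by
        rw [hb]; simp only [if_neg (fun h : j = i₀ => hi (h ▸ hj))]
    have hTsum : ∑ j ∈ T, l j • L j = L i₀ := by
      rw [← hsum, Finsupp.linearCombination_apply, Finsupp.sum]
      refine (Finset.sum_subset ?_ fun j _ hnj => by
        rw [Finsupp.notMem_support_iff.mp hnj, zero_smul]).symm
      intro j hj
      exact hl hj
    rw [h2, hTsum, hb]
    simp
  have := hind b hbsum i₀ (Finset.mem_insert_self _ _)
  rw [hb] at this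
  simp at this

end quot

section main
variable {s : ℕ} {σ' : Type}

def infI (L : Fin s → MvPolynomial σ' k) (c : ℕ) : Ideal (MvPolynomial σ' k) :=
  ⨅ (T : Finset (Fin s)) (_ : T.card = c), Ideal.span (L '' ↑T)

def spanJ (L : Fin s → MvPolynomial σ' k) (c : ℕ) : Ideal (MvPolynomial σ' k) :=
  Ideal.span {f | ∃ T : Finset (Fin s), T.card = s - c + 1 ∧ f = ∏ i ∈ T, L i}

lemma mem_infI {L : Fin s → MvPolynomial σ' k} {c : ℕ} {f : MvPolynomial σ' k} :
    f ∈ infI L c ↔ ∀ T : Finset (Fin s), T.card = c → f ∈ Ideal.span (L '' ↑T) := by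
  simp [infI, Ideal.mem_iInf]

lemma spanJ_le_infI (L : Fin s → MvPolynomial σ' k) {c : ℕ} (hcs : c ≤ s) :
    spanJ L c ≤ infI L c := by
  rw [spanJ, Ideal.span_le]
  rintro f ⟨T', hT', rfl⟩
  rw [SetLike.mem_coe, mem_infI]
  intro T hT
  have hcap : (T ∩ T').Nonempty := by
    rw [← Finset.card_pos]
    have h1 : (T ∪ T').card ≤ s := le_trans (Finset.card_le_univ _) (by simp)
    have h2 := Finset.card_inter_add_card_union T T'
    omega
  obtain ⟨i₀, hmem⟩ := hcap
  rw [Finset.mem_inter] at hmem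
  rw [← Finset.mul_prod_erase T' L hmem.2]
  exact Ideal.mul_mem_right _ _ (Ideal.subset_span ⟨i₀, hmem.1, rfl⟩)

lemma infI_zero (L : Fin s → MvPolynomial σ' k) : infI L 0 = spanJ L 0 := by
  have h1 : infI L 0 ≤ ⊥ := by
    refine le_trans (iInf_le _ (∅ : Finset (Fin s))) (le_trans (iInf_le _ Finset.card_empty) ?_)
    simp
  have h2 : spanJ L 0 = ⊥ := by
    rw [spanJ]
    convert Ideal.span_empty
    ext f
    simp only [Set.mem_setOf_eq, Set.mem_empty_iff_false, iff_false, not_exists]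
    rintro T ⟨hT, -⟩
    have := Finset.card_le_univ T
    simp only [Finset.card_univ, Fintype.card_fin] at this
    omega
  rw [h2]
  exact le_antisymm h1 bot_le


theorem main_thm (s : ℕ) :
    ∀ (σ : Type) [Fintype σ] [DecidableEq σ] (c : ℕ) (L : Fin s → MvPolynomial σ k),
    (∀ i, (L i).IsHomogeneous 1) →
    (∀ T : Finset (Fin s), T.card ≤ min s (Fintype.card σ) →
      ∀ b : Fin s → k, ∑ i ∈ T, b i • L i = 0 → ∀ i ∈ T, b i = 0) →
    c ≤ s → c < Fintype.card σ → infI L c = spanJ L c := by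
  induction s with
  | zero =>
    intro σ _ _ c L hL hind hcs hcm
    have : c = 0 := Nat.le_zero.mp hcs
    subst this
    exact infI_zero L
  | succ s ih =>
    intro σ _ _ c L hL hind hcs hcm
    rcases Nat.eq_zero_or_pos c with rfl | hc1
    · exact infI_zero L
    rcases eq_or_lt_of_le hcs with rfl | hlt
    · -- top case c = s + 1
      apply le_antisymm
      · refine le_trans (le_trans (iInf_le _ Finset.univ) (iInf_le _ (by simp))) ?_
        rw [Ideal.span_le]
        rintro f ⟨i, -, rfl⟩
        exact Ideal.subset_span ⟨{i}, by rw [Finset.card_singleton]; omega,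
          (Finset.prod_singleton _ _).symm⟩
      · exact spanJ_le_infI _ le_rfl
    have hcs' : c ≤ s := Nat.lt_succ_iff.mp hlt
    have hσ1 : 1 ≤ Fintype.card σ := lt_of_le_of_lt (Nat.zero_le c) hcm
    set lst := Fin.last s with hlst
    set emb : Fin s ↪ Fin (s + 1) := Fin.castSuccEmb with hemb
    have hlast_not : ∀ T' : Finset (Fin s), lst ∉ T'.map emb := by
      intro T' hmem
      rw [Finset.mem_map] at hmem
      obtain ⟨i, -, hi⟩ := hmem
      exact (Fin.castSucc_lt_last i).ne hi
    set g := L lst with hg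
    have hg0 : g ≠ 0 := by
      intro h
      have hcard1 : ({lst} : Finset (Fin (s+1))).card ≤ min (s+1) (Fintype.card σ) := by
        rw [Finset.card_singleton]; omega
      have hs0 : ∑ i ∈ ({lst} : Finset (Fin (s+1))), (1 : k) • L i = 0 := by
        rw [Finset.sum_singleton, one_smul, ← hg, h]
      have := hind _ hcard1 _ hs0 lst (Finset.mem_singleton_self _)
      exact one_ne_zero this
    obtain ⟨j₀, π, τ, hπτ, hsec, hπg, hπhom⟩ := quot_one (hL lst) hg0
    have hcard_sub : Fintype.card {j : σ // j ≠ j₀} = Fintype.card σ - 1 := by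
      rw [Fintype.card_subtype_compl, Fintype.card_subtype_eq]
    set Lb : Fin s → MvPolynomial {j : σ // j ≠ j₀} k := fun i => π (L (emb i)) with hLb
    have hLbh : ∀ i, (Lb i).IsHomogeneous 1 := fun i => hπhom _ _ (hL _)
    -- independence descends to the quotient
    have hindbar : ∀ T' : Finset (Fin s),
        T'.card ≤ min s (Fintype.card {j : σ // j ≠ j₀}) →
        ∀ b : Fin s → k, ∑ i ∈ T', b i • Lb i = 0 → ∀ i ∈ T', b i = 0 := by
      intro T' hT' b hb
      have h0 : π (∑ i ∈ T', b i • L (emb i)) = 0 := by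
        rw [map_sum]
        simpa only [map_smul] using hb
      have hker : (∑ i ∈ T', b i • L (emb i)) ∈ Ideal.span {g} :=
        mem_span_of_map_eq_zero π τ hsec h0
      have hhom : (∑ i ∈ T', b i • L (emb i)).IsHomogeneous 1 :=
        IsHomogeneous.sum _ _ _ fun i _ => by
          rw [smul_eq_C_mul]
          simpa using (isHomogeneous_C _ (b i)).mul (hL (emb i))
      have hspan := mem_kspan_of_homog
        (fun p hp => by rw [Set.mem_singleton_iff] at hp; rw [hp]; exact hL lst) hhom hker
      rw [Submodule.mem_span_singleton] at hspan
      obtain ⟨b', hb'⟩ := hspan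
      set B : Fin (s+1) → k := fun j => if hj : j = lst then -b' else b (j.castPred hj)
        with hB
      have hBemb : ∀ i : Fin s, B (emb i) = b i := by
        intro i
        have hne : emb i ≠ lst := (Fin.castSucc_lt_last i).ne
        show (if hj : emb i = lst then -b' else b ((emb i).castPred hj)) = b i
        rw [dif_neg hne]
        congr 1
      have hBlst : B lst = -b' := dif_pos rfl
      have hBsum : ∑ j ∈ insert lst (T'.map emb), B j • L j = 0 := by
        rw [Finset.sum_insert (hlast_not T'), Finset.sum_map]
        rw [Finset.sum_congr rfl (fun i (_ : i ∈ T') => by rw [hBemb i])]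
        rw [← hb', hBlst, ← hg, neg_smul, neg_add_cancel]
      have hcardB : (insert lst (T'.map emb)).card ≤ min (s+1) (Fintype.card σ) := by
        rw [Finset.card_insert_of_notMem (hlast_not T'), Finset.card_map]
        omega
      intro i hi
      have := hind _ hcardB B hBsum (emb i)
        (Finset.mem_insert_of_mem (Finset.mem_map_of_mem emb hi))
      rwa [hBemb] at this
    -- independence for the restricted family
    have hind' : ∀ T : Finset (Fin s), T.card ≤ min s (Fintype.card σ) →
        ∀ b : Fin s → k, ∑ i ∈ T, b i • L (emb i) = 0 → ∀ i ∈ T, b i = 0 := by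
      intro T hT b hb
      set B : Fin (s+1) → k := fun j => if hj : j = lst then 0 else b (j.castPred hj) with hB
      have hBemb : ∀ i : Fin s, B (emb i) = b i := by
        intro i
        have hne : emb i ≠ lst := (Fin.castSucc_lt_last i).ne
        show (if hj : emb i = lst then 0 else b ((emb i).castPred hj)) = b i
        rw [dif_neg hne]
        congr 1
      have hBsum : ∑ j ∈ T.map emb, B j • L j = 0 := by
        rw [Finset.sum_map]
        rw [Finset.sum_congr rfl (fun i (_ : i ∈ T) => by rw [hBemb i])]
        exact hb
      have hcardB : (T.map emb).card ≤ min (s+1) (Fintype.card σ) := by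
        rw [Finset.card_map]; omega
      intro i hi
      have := hind _ hcardB B hBsum (emb i) (Finset.mem_map_of_mem emb hi)
      rwa [hBemb] at this
    apply le_antisymm ?_ (spanJ_le_infI _ hcs)
    intro f hf
    -- Step 1 : the image of f lies in the star ideal of the quotient configuration
    have hstep1 : π f ∈ infI Lb (c - 1) := by
      rw [mem_infI]
      intro T' hT'
      have hcardT : (insert lst (T'.map emb)).card = c := by
        rw [Finset.card_insert_of_notMem (hlast_not T'), Finset.card_map]
        omega
      have hfT : f ∈ Ideal.span (L '' ↑(insert lst (T'.map emb))) :=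
        mem_infI.mp hf _ hcardT
      have hmap : π f ∈ Ideal.map π (Ideal.span (L '' ↑(insert lst (T'.map emb)))) :=
        Ideal.mem_map_of_mem _ hfT
      rw [Ideal.map_span] at hmap
      have himg : ↑π '' (L '' ↑(insert lst (T'.map emb)))
          = insert (0 : MvPolynomial {j : σ // j ≠ j₀} k) (Lb '' ↑T') := by
        rw [Finset.coe_insert, Set.image_insert_eq, Set.image_insert_eq, ← hg, hπg,
          Finset.coe_map, Set.image_image, Set.image_image]
      rw [himg] at hmap
      have hins : Ideal.span (insert (0 : MvPolynomial {j : σ // j ≠ j₀} k) (Lb '' ↑T'))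
          = Ideal.span (Lb '' ↑T') := Submodule.span_insert_zero
      rwa [hins] at hmap
    have hccard : c - 1 < Fintype.card {j : σ // j ≠ j₀} := by
      rw [hcard_sub]; omega
    rw [ih _ (c-1) Lb hLbh hindbar (by omega) hccard] at hstep1
    -- Step 2 : pull back along τ
    set Sp : Set (MvPolynomial σ k) :=
      {h | ∃ T' : Finset (Fin s), T'.card = s - (c-1) + 1 ∧ h = ∏ i ∈ T'.map emb, L i} with hSp
    have himg2 : ↑π '' Sp = {h | ∃ T' : Finset (Fin s), T'.card = s - (c-1) + 1 ∧
        h = ∏ i ∈ T', Lb i} := by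
      ext y
      constructor
      · rintro ⟨x, ⟨T', hT', rfl⟩, rfl⟩
        refine ⟨T', hT', ?_⟩
        rw [map_prod, Finset.prod_map]
      · rintro ⟨T', hT', rfl⟩
        refine ⟨∏ i ∈ T'.map emb, L i, ⟨T', hT', rfl⟩, ?_⟩
        rw [map_prod, Finset.prod_map]
    rw [spanJ, ← himg2] at hstep1
    have hpull := pull π τ hsec _ hstep1
    rw [Ideal.span_union, Submodule.mem_sup] at hpull
    obtain ⟨q, hq, r, hr, hqr⟩ := hpull
    rw [Ideal.mem_span_singleton'] at hr
    obtain ⟨h, hh⟩ := hr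
    -- q is in spanJ L c
    have hSp_le : Ideal.span Sp ≤ spanJ L c := by
      refine Ideal.span_mono ?_
      rintro x ⟨T', hT', rfl⟩
      exact ⟨T'.map emb, by rw [Finset.card_map]; omega, rfl⟩
    have hq_spanJ : q ∈ spanJ L c := hSp_le hq
    have hq_inf : q ∈ infI L c := spanJ_le_infI L hcs hq_spanJ
    -- h lies in all the codim-c ideals of the restricted configuration
    have hstep3 : h ∈ infI (fun i => L (emb i)) c := by
      rw [mem_infI]
      intro T hT
      have hcardmap : (T.map emb).card = c := by rw [Finset.card_map]; exact hT
      have hPprime : (Ideal.span (L '' ↑(T.map emb))).IsPrime :=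
        span_isPrime L (T.map emb) (fun i _ => hL i)
          (hind _ (by rw [hcardmap]; omega))
      have hfP : f ∈ Ideal.span (L '' ↑(T.map emb)) := mem_infI.mp hf _ hcardmap
      have hqP : q ∈ Ideal.span (L '' ↑(T.map emb)) := mem_infI.mp hq_inf _ hcardmap
      have hgP : h * g ∈ Ideal.span (L '' ↑(T.map emb)) := by
        have : h * g = f - q := by rw [hh, ← hqr]; ring
        rw [this]
        exact Ideal.sub_mem _ hfP hqP
      have hgnot : g ∉ Ideal.span (L '' ↑(T.map emb)) := by
        refine not_mem_span L (T.map emb) (hlast_not T) (fun i _ => hL i)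
          (hind _ ?_)
        rw [Finset.card_insert_of_notMem (hlast_not T), hcardmap]
        omega
      rcases hPprime.mem_or_mem hgP with hmem | hmem
      · have himg3 : L '' ↑(T.map emb) = (fun i => L (emb i)) '' ↑T := by
          rw [Finset.coe_map, Set.image_image]
        rwa [himg3] at hmem
      · exact absurd hmem hgnot
    rw [ih σ c (fun i => L (emb i)) (fun i => hL _) hind' hcs' hcm] at hstep3
    -- Assemble
    have hmul : ∀ x, x ∈ spanJ (fun i => L (emb i)) c → x * g ∈ spanJ L c := by
      intro x hx
      rw [spanJ] at hx
      refine Submodule.span_induction ?_ ?_ ?_ ?_ hx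
      · rintro y ⟨T₂, hT₂, rfl⟩
        refine Ideal.subset_span ⟨insert lst (T₂.map emb), ?_, ?_⟩
        · rw [Finset.card_insert_of_notMem (hlast_not T₂), Finset.card_map]
          omega
        · rw [Finset.prod_insert (hlast_not T₂), Finset.prod_map, ← hg]
          ring
      · rw [zero_mul]
        exact Ideal.zero_mem _
      · intro x y hx' hy' hx'' hy''
        rw [add_mul]
        exact Ideal.add_mem _ hx'' hy''
      · intro a x hx' hx''
        rw [smul_eq_mul, mul_assoc]
        exact Ideal.mul_mem_left _ _ hx''
    rw [← hqr]
    exact Ideal.add_mem _ hq_spanJ (hh ▸ hmul h hstep3)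

end main
end StarAux


theorem star_configuration_generators {k : Type*} [Field k] [Infinite k] {n s c : ℕ}
    (L : Fin s → MvPolynomial (Fin (n + 1)) k) (hL : MeetProperly L)
    (hs : 1 ≤ s) (hc1 : 1 ≤ c) (hc2 : c ≤ min s n) :
    initialDegree (starIdeal L c) = s - c + 1 ∧
    starIdeal L c =
      Ideal.span {f | ∃ T : Finset (Fin s), T.card = s - c + 1 ∧ f = ∏ i ∈ T, L i} := by
  obtain ⟨hhom, hindep⟩ := hL
  have hind : ∀ T : Finset (Fin s), T.card ≤ min s (n + 1) →
      ∀ b : Fin s → k, ∑ i ∈ T, b i • L i = 0 → ∀ i ∈ T, b i = 0 := by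
    intro T hT
    exact (StarAux.findep_iff L T).mp (hindep T hT)
  have hcs : c ≤ s := le_trans hc2 (min_le_left _ _)
  have hcn : c ≤ n := le_trans hc2 (min_le_right _ _)
  have hcm : c < Fintype.card (Fin (n + 1)) := by
    rw [Fintype.card_fin]; omega
  have hmain := StarAux.main_thm s (Fin (n + 1)) c L hhom
    (by rw [Fintype.card_fin]; exact hind) hcs hcm
  have heq : starIdeal L c =
      Ideal.span {f | ∃ T : Finset (Fin s), T.card = s - c + 1 ∧ f = ∏ i ∈ T, L i} := hmain
  refine ⟨?_, heq⟩
  have hLne : ∀ i, L i ≠ 0 := by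
    intro i h0
    have hcard : ({i} : Finset (Fin s)).card ≤ min s (n + 1) := by
      rw [Finset.card_singleton]; omega
    have hsum : ∑ j ∈ ({i} : Finset (Fin s)), (1 : k) • L j = 0 := by
      rw [Finset.sum_singleton, one_smul, h0]
    exact one_ne_zero (hind _ hcard _ hsum i (Finset.mem_singleton_self i))
  obtain ⟨T₀, -, hT₀⟩ := Finset.exists_subset_card_eq
    (s := (Finset.univ : Finset (Fin s))) (n := s - c + 1)
    (by rw [Finset.card_univ, Fintype.card_fin]; omega)
  have hgen : ∀ p ∈ {f | ∃ T : Finset (Fin s), T.card = s - c + 1 ∧ f = ∏ i ∈ T, L i},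
      MvPolynomial.IsHomogeneous p (s - c + 1) := by
    rintro p ⟨T, hT, rfl⟩
    have := MvPolynomial.IsHomogeneous.prod T L (fun _ => 1) (fun i _ => hhom i)
    simpa [hT] using this
  have hf0 : (∏ i ∈ T₀, L i) ∈ starIdeal L c := by
    rw [heq]; exact Ideal.subset_span ⟨T₀, hT₀, rfl⟩
  have hfne : (∏ i ∈ T₀, L i) ≠ 0 := Finset.prod_ne_zero_iff.mpr fun i _ => hLne i
  have hfhom : (∏ i ∈ T₀, L i).IsHomogeneous (s - c + 1) := hgen _ ⟨T₀, hT₀, rfl⟩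
  have hmem : (s - c + 1) ∈ {d : ℕ | ∃ f ∈ starIdeal L c, f ≠ 0 ∧ f.IsHomogeneous d} :=
    ⟨∏ i ∈ T₀, L i, hf0, hfne, hfhom⟩
  have hlb : ∀ d ∈ {d : ℕ | ∃ f ∈ starIdeal L c, f ≠ 0 ∧ f.IsHomogeneous d},
      s - c + 1 ≤ d := by
    rintro d ⟨f, hfI, hf0', hfh⟩
    by_contra hd
    push_neg at hd
    have h0 := StarAux.hc_eq_zero_of_mem_span hgen (heq ▸ hfI) hd
    have hcomp : MvPolynomial.homogeneousComponent d f = f := by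
      rw [homogeneousComponent_of_mem ((mem_homogeneousSubmodule _ _).mpr hfh), if_pos rfl]
    rw [hcomp] at h0
    exact hf0' h0
  exact le_antisymm (Nat.sInf_le hmem) (le_csInf ⟨_, hmem⟩ hlb)
end
end

section
/- Let V_{c−1} and V_c be the codimension-(c−1) and codimension-c star configurations determined by the same s hyperplanes in P^n meeting properly, where 2 ≤ c ≤ min(s, n). Then I_{V_{c−1}} ⊆ I_{V_c}^{(2)}, i.e., the ideal of V_{c−1} is contained in the symbolic square of the ideal of V_c. -/
open MvPolynomial

noncomputable section

def starSymbolic {k : Type*} [Field k] {n s : ℕ} (L : Fin s → MvPolynomial (Fin (n + 1)) k)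
    (c ℓ : ℕ) : Ideal (MvPolynomial (Fin (n + 1)) k) :=
  ⨅ (T : Finset (Fin s)) (_ : T.card = c), (Ideal.span (L '' ↑T)) ^ ℓ

namespace StarAux

variable {k : Type*} [Field k] {m : ℕ}

/-- The linear map sending a coefficient vector to the corresponding linear form. -/
def lf : (Fin m → k) →ₗ[k] MvPolynomial (Fin m) k :=
  ∑ j : Fin m, (LinearMap.proj j).smulRight (X j)

lemma lf_apply (w : Fin m → k) :
    (lf w : MvPolynomial (Fin m) k) = ∑ j : Fin m, w j • (X j : MvPolynomial (Fin m) k) := by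
  simp [lf, LinearMap.sum_apply]

lemma lf_single (j : Fin m) : (lf (Pi.single j (1 : k)) : MvPolynomial (Fin m) k) = X j := by
  rw [lf_apply, Finset.sum_eq_single j]
  · simp
  · intro t _ ht
    rw [Pi.single_eq_of_ne ht, zero_smul]
  · simp

lemma lf_coeff (w : Fin m → k) (j : Fin m) :
    coeff (Finsupp.single j 1) (lf w : MvPolynomial (Fin m) k) = w j := by
  rw [lf_apply, coeff_sum, Finset.sum_eq_single j]
  · simp [coeff_smul]
  · intro t _ ht
    rw [coeff_smul, coeff_X', if_neg, smul_zero]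
    simp [Finsupp.single_eq_single_iff, ht]
  · simp

lemma degree_one_exists_single (d : Fin m →₀ ℕ) (hd : d.degree = 1) :
    ∃ j, d = Finsupp.single j 1 := by
  have hsum : ∑ a ∈ d.support, d a = 1 := hd
  have hne : d.support.Nonempty := by
    by_contra h
    rw [Finset.not_nonempty_iff_eq_empty] at h
    rw [h, Finset.sum_empty] at hsum
    omega
  have hcard : d.support.card ≤ ∑ a ∈ d.support, d a := by
    calc d.support.card = ∑ _a ∈ d.support, 1 := by simp
    _ ≤ ∑ a ∈ d.support, d a := by
        apply Finset.sum_le_sum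
        intro i hi
        exact Nat.one_le_iff_ne_zero.2 (Finsupp.mem_support_iff.1 hi)
  rw [hsum] at hcard
  have hcard1 : d.support.card = 1 := le_antisymm hcard (Finset.Nonempty.card_pos hne)
  obtain ⟨j, hj⟩ := Finset.card_eq_one.1 hcard1
  refine ⟨j, ?_⟩
  obtain ⟨-, hd2⟩ := Finsupp.support_eq_singleton.1 hj
  have hdj : d j = 1 := by
    rw [hj, Finset.sum_singleton] at hsum
    exact hsum
  rw [hd2, hdj]

lemma eq_lf_of_isHomogeneous_one (p : MvPolynomial (Fin m) k) (hp : p.IsHomogeneous 1) :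
    p = lf (fun j => coeff (Finsupp.single j 1) p) := by
  apply MvPolynomial.ext
  intro d
  rw [lf_apply, coeff_sum]
  by_cases h : ∃ j, d = Finsupp.single j 1
  · obtain ⟨j, rfl⟩ := h
    rw [Finset.sum_eq_single j]
    · simp [coeff_smul]
    · intro t _ ht
      rw [coeff_smul, coeff_X', if_neg, smul_zero]
      simp [Finsupp.single_eq_single_iff, ht]
    · simp
  · have h1 : coeff d p = 0 := by
      apply hp.coeff_eq_zero
      intro hdeg
      exact h (degree_one_exists_single d hdeg)
    rw [h1]
    symm
    apply Finset.sum_eq_zero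
    intro t _
    rw [coeff_smul, coeff_X', if_neg, smul_zero]
    intro he
    exact h ⟨t, he.symm⟩

lemma aeval_lf (A : (Fin m → k) →ₗ[k] (Fin m → k)) (w : Fin m → k) :
    aeval (fun j => (lf (A (Pi.single j 1)) : MvPolynomial (Fin m) k)) (lf w) = lf (A w) := by
  rw [lf_apply w, map_sum]
  simp only [map_smul, aeval_X]
  have hw : ∑ j : Fin m, w j • (Pi.single j (1 : k) : Fin m → k) = w := by
    have : ∀ j : Fin m, w j • (Pi.single j (1 : k) : Fin m → k) = Pi.single j (w j) := by
      intro j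
      rw [← Pi.single_smul, smul_eq_mul, mul_one]
    simp_rw [this]
    exact Finset.univ_sum_single w
  calc ∑ j : Fin m, w j • (lf (A (Pi.single j 1)) : MvPolynomial (Fin m) k)
      = lf (A (∑ j : Fin m, w j • (Pi.single j (1 : k) : Fin m → k))) := by
        rw [map_sum, map_sum]
        simp only [map_smul]
    _ = lf (A w) := by rw [hw]

/-- Monomial lemma: a polynomial lying in all the "erase one variable" ideals lies in the
square of the full variable ideal. -/
lemma mono_key {c : ℕ} (hc : 2 ≤ c) (emb : Fin c → Fin m)
    (hemb : Function.Injective emb) {g : MvPolynomial (Fin m) k}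
    (hg : ∀ i : Fin c, g ∈ Ideal.span (X '' (emb '' {j | j ≠ i}) : Set (MvPolynomial (Fin m) k))) :
    g ∈ (Ideal.span (X '' Set.range emb) : Ideal (MvPolynomial (Fin m) k)) ^ 2 := by
  have hc0 : 0 < c := by omega
  rw [← support_sum_monomial_coeff g]
  apply Ideal.sum_mem
  intro d hd
  have hget : ∀ i : Fin c, ∃ j : Fin c, j ≠ i ∧ d (emb j) ≠ 0 := by
    intro i
    obtain ⟨a, ha, hda⟩ := (mem_ideal_span_X_image.mp (hg i)) d hd
    obtain ⟨j, hj, rfl⟩ := ha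
    exact ⟨j, hj, hda⟩
  obtain ⟨j₁, -, hj₁⟩ := hget ⟨0, hc0⟩
  obtain ⟨j₂, hj₂ne, hj₂⟩ := hget j₁
  set a := emb j₁ with ha
  set b := emb j₂ with hb
  have hab : a ≠ b := fun h => hj₂ne (hemb h.symm)
  have hda : 1 ≤ d a := Nat.one_le_iff_ne_zero.2 hj₁
  have hdb : 1 ≤ d b := Nat.one_le_iff_ne_zero.2 hj₂
  set d' : Fin m →₀ ℕ := d - Finsupp.single a 1 - Finsupp.single b 1 with hd'
  have hdecomp : d = Finsupp.single a 1 + (Finsupp.single b 1 + d') := by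
    ext t
    simp only [Finsupp.add_apply, hd', Finsupp.tsub_apply]
    rcases eq_or_ne a t with rfl | h1
    · rcases eq_or_ne b a with h2 | h2
      · exact absurd h2.symm hab
      · rw [Finsupp.single_eq_same, Finsupp.single_eq_of_ne' h2]
        omega
    · rcases eq_or_ne b t with rfl | h2
      · rw [Finsupp.single_eq_of_ne' h1, Finsupp.single_eq_same]
        omega
      · rw [Finsupp.single_eq_of_ne' h1, Finsupp.single_eq_of_ne' h2]
        omega
  have heq : (monomial d) (coeff d g) =
      X a * (X b * (monomial d') (coeff d g)) := by
    have hXa : (X a : MvPolynomial (Fin m) k) = monomial (Finsupp.single a 1) 1 := rfl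
    have hXb : (X b : MvPolynomial (Fin m) k) = monomial (Finsupp.single b 1) 1 := rfl
    rw [hXa, hXb, monomial_mul, monomial_mul, one_mul, one_mul, ← hdecomp]
  rw [heq, pow_two]
  apply Ideal.mul_mem_mul
  · exact Ideal.subset_span ⟨a, ⟨j₁, rfl⟩, rfl⟩
  · exact Ideal.mul_mem_right _ _ (Ideal.subset_span ⟨b, ⟨j₂, rfl⟩, rfl⟩)

/-- Key lemma: if f lies in the span of every subfamily missing one of the G i, then f lies
in the square of the span of all G i, provided the G i are linearly independent linear forms. -/
lemma key {c : ℕ} (hc : 2 ≤ c)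
    (G : Fin c → MvPolynomial (Fin m) k) (hG : ∀ i, (G i).IsHomogeneous 1)
    (hind : LinearIndependent k G) {f : MvPolynomial (Fin m) k}
    (hf : ∀ i : Fin c, f ∈ Ideal.span (G '' {j | j ≠ i})) :
    f ∈ (Ideal.span (Set.range G)) ^ 2 := by
  classical
  set v : Fin c → (Fin m → k) := fun i j => coeff (Finsupp.single j 1) (G i) with hv
  have hGv : ∀ i, G i = lf (v i) := fun i => eq_lf_of_isHomogeneous_one _ (hG i)
  have hvind : LinearIndependent k v := by
    apply LinearIndependent.of_comp (lf : (Fin m → k) →ₗ[k] MvPolynomial (Fin m) k)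
    have : (lf : (Fin m → k) →ₗ[k] MvPolynomial (Fin m) k) ∘ v = G := by
      funext i; exact (hGv i).symm
    rw [this]; exact hind
  have hset : LinearIndepOn k id (Set.range v) :=
    (linearIndepOn_id_range_iff hvind.injective).mpr hvind
  let b := Module.Basis.extend hset
  let eqv : _ ≃ Fin m := b.indexEquiv (Pi.basisFun k (Fin m))
  let u : (Fin m → k) ≃ₗ[k] (Fin m → k) := (Pi.basisFun k (Fin m)).equiv b eqv.symm
  have hmemext : ∀ i, v i ∈ hset.extend (Set.subset_univ _) :=
    fun i => hset.subset_extend _ ⟨i, rfl⟩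
  let emb : Fin c → Fin m := fun i => eqv ⟨v i, hmemext i⟩
  have hu_emb : ∀ i, u (Pi.single (emb i) 1) = v i := by
    intro i
    have h1 : (Pi.single (emb i) (1 : k)) = (Pi.basisFun k (Fin m)) (emb i) :=
      (Pi.basisFun_apply k (Fin m) (emb i)).symm
    rw [h1]
    show ((Pi.basisFun k (Fin m)).equiv b eqv.symm) ((Pi.basisFun k (Fin m)) (emb i)) = v i
    rw [Module.Basis.equiv_apply]
    show b (eqv.symm (eqv ⟨v i, hmemext i⟩)) = v i
    rw [Equiv.symm_apply_apply]
    exact Module.Basis.extend_apply_self hset _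
  have hembinj : Function.Injective emb := by
    intro i i' h
    have h2 : (⟨v i, hmemext i⟩ : hset.extend (Set.subset_univ _)) = ⟨v i', hmemext i'⟩ :=
      eqv.injective h
    exact hvind.injective (Subtype.ext_iff.1 h2)
  let φ : MvPolynomial (Fin m) k →ₐ[k] MvPolynomial (Fin m) k :=
    aeval (fun j => (lf ((u : (Fin m → k) →ₗ[k] (Fin m → k)) (Pi.single j 1)) :
      MvPolynomial (Fin m) k))
  let ψ : MvPolynomial (Fin m) k →ₐ[k] MvPolynomial (Fin m) k :=
    aeval (fun j => (lf ((u.symm : (Fin m → k) →ₗ[k] (Fin m → k)) (Pi.single j 1)) :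
      MvPolynomial (Fin m) k))
  have hφlf : ∀ w, φ (lf w) = lf ((u : (Fin m → k) →ₗ[k] (Fin m → k)) w) :=
    fun w => aeval_lf (u : (Fin m → k) →ₗ[k] (Fin m → k)) w
  have hψlf : ∀ w, ψ (lf w) = lf ((u.symm : (Fin m → k) →ₗ[k] (Fin m → k)) w) :=
    fun w => aeval_lf (u.symm : (Fin m → k) →ₗ[k] (Fin m → k)) w
  have hψG : ∀ i, ψ (G i) = X (emb i) := by
    intro i
    rw [hGv i, hψlf]
    have : (u.symm : (Fin m → k) →ₗ[k] (Fin m → k)) (v i) = Pi.single (emb i) 1 := by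
      rw [← hu_emb i]
      exact u.symm_apply_apply _
    rw [this, lf_single]
  have hφψ : ∀ p, φ (ψ p) = p := by
    have : φ.comp ψ = AlgHom.id k (MvPolynomial (Fin m) k) := by
      apply MvPolynomial.algHom_ext
      intro j
      show φ (ψ (X j)) = X j
      have hψX : ψ (X j) = lf ((u.symm : (Fin m → k) →ₗ[k] (Fin m → k)) (Pi.single j 1)) :=
        aeval_X _ j
      rw [hψX, hφlf]
      have : (u : (Fin m → k) →ₗ[k] (Fin m → k))
          ((u.symm : (Fin m → k) →ₗ[k] (Fin m → k)) (Pi.single j 1)) = Pi.single j 1 :=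
        u.apply_symm_apply _
      rw [this, lf_single]
    intro p
    have := congrArg (fun g => g p) this
    simpa using this
  -- transport the hypotheses through ψ
  have hψf : ∀ i : Fin c, ψ f ∈ Ideal.span (X '' (emb '' {j | j ≠ i}) :
      Set (MvPolynomial (Fin m) k)) := by
    intro i
    have h1 : ψ f ∈ Ideal.map ψ (Ideal.span (G '' {j | j ≠ i})) :=
      Ideal.mem_map_of_mem ψ (hf i)
    rw [Ideal.map_span] at h1
    have h2 : (ψ : MvPolynomial (Fin m) k → MvPolynomial (Fin m) k) '' (G '' {j | j ≠ i}) =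
        X '' (emb '' {j | j ≠ i}) := by
      rw [Set.image_image, Set.image_image]
      apply Set.image_congr
      intro j _
      exact hψG j
    rwa [h2] at h1
  have hmono := mono_key hc emb hembinj hψf
  -- transport back through φ
  have hrange : (φ : MvPolynomial (Fin m) k → MvPolynomial (Fin m) k) ''
      (X '' Set.range emb) = Set.range G := by
    rw [Set.image_image, ← Set.range_comp]
    have : (fun j => φ (X (emb j))) = G := by
      funext j
      have hφX : φ (X (emb j)) =
          lf ((u : (Fin m → k) →ₗ[k] (Fin m → k)) (Pi.single (emb j) 1)) := aeval_X _ _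
      rw [hφX]
      show lf (u (Pi.single (emb j) 1)) = G j
      rw [hu_emb j, ← hGv j]
    exact congrArg Set.range this
  have hfinal : f ∈ Ideal.map φ ((Ideal.span (X '' Set.range emb) :
      Ideal (MvPolynomial (Fin m) k)) ^ 2) := by
    have := Ideal.mem_map_of_mem φ hmono
    rwa [hφψ f] at this
  rw [Ideal.map_pow, Ideal.map_span, hrange] at hfinal
  exact hfinal

end StarAux

theorem star_prev_sub_symbolic_square {k : Type*} [Field k] [Infinite k] {n s c : ℕ}
    (L : Fin s → MvPolynomial (Fin (n + 1)) k) (hL : MeetProperly L)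
    (hs : 1 ≤ s) (hc1 : 2 ≤ c) (hc2 : c ≤ min s n) :
    starIdeal L (c - 1) ≤ starSymbolic L c 2 := by
  classical
  intro f hf
  rw [starSymbolic, Ideal.mem_iInf]
  intro T
  rw [Ideal.mem_iInf]
  intro hT
  -- hT : T.card = c
  let hT' : {x // x ∈ T} ≃ Fin c := T.equivFin.trans (finCongr hT)
  let e : Fin c → Fin s := fun i => (hT'.symm i : Fin s)
  have heT : ∀ i, e i ∈ T := fun i => (hT'.symm i).2
  have heinj : Function.Injective e := by
    intro i i' h
    exact hT'.symm.injective (Subtype.ext h)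
  have hrange : Set.range e = ↑T := by
    ext x
    constructor
    · rintro ⟨i, rfl⟩; exact heT i
    · intro hx
      exact ⟨hT' ⟨x, hx⟩, by simp [e, Equiv.symm_apply_apply]⟩
  set G : Fin c → MvPolynomial (Fin (n + 1)) k := fun i => L (e i) with hG
  have hGhom : ∀ i, (G i).IsHomogeneous 1 := fun i => hL.1 _
  have hind : LinearIndependent k G := by
    have h := hL.2 T (by
      rw [hT]
      exact le_trans hc2 (min_le_min le_rfl (Nat.le_succ n)))
    exact h.comp hT'.symm hT'.symm.injective
  have hfmem : ∀ i : Fin c, f ∈ Ideal.span (G '' {j | j ≠ i}) := by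
    intro i
    have hcard : (T.erase (e i)).card = c - 1 := by
      rw [Finset.card_erase_of_mem (heT i), hT]
    have h1 : f ∈ Ideal.span (L '' ↑(T.erase (e i))) := by
      rw [starIdeal, Ideal.mem_iInf] at hf
      have := hf (T.erase (e i))
      rw [Ideal.mem_iInf] at this
      exact this hcard
    have hseteq : (L '' ↑(T.erase (e i)) : Set (MvPolynomial (Fin (n + 1)) k)) =
        G '' {j | j ≠ i} := by
      have h2 : (↑(T.erase (e i)) : Set (Fin s)) = e '' {j | j ≠ i} := by
        rw [Finset.coe_erase]
        ext x
        constructor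
        · rintro ⟨hxT, hxe⟩
          have : x ∈ Set.range e := hrange ▸ hxT
          obtain ⟨j, rfl⟩ := this
          refine ⟨j, ?_, rfl⟩
          intro hji
          exact hxe (by rw [hji]; exact Set.mem_singleton _)
        · rintro ⟨j, hj, rfl⟩
          refine ⟨heT j, ?_⟩
          intro hmem
          exact hj (heinj (Set.mem_singleton_iff.1 hmem))
      rw [h2, Set.image_image]
    rw [hseteq] at h1
    exact h1
  have hkey := StarAux.key hc1 G hGhom hind hfmem
  have : Set.range G = L '' ↑T := by
    rw [hG]
    rw [show (fun i => L (e i)) = L ∘ e from rfl, Set.range_comp, hrange]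
  rwa [this] at hkey
end
end

section
/- Let V_{c−1} and V_c be the codimension-(c−1) and codimension-c star configurations determined by the same s hyperplanes in P^n meeting properly, where 2 ≤ c ≤ min(s, n). Let F ∈ I_{V_c} be a homogeneous element of degree s−c+1 such that F ∉ (L_{i_1},…,L_{i_{c−1}}) for every choice of c−1 indices 1 ≤ i_1 < ⋯ < i_{c−1} ≤ s (i.e., F does not vanish on any component of V_{c−1}). Then F·I_{V_c} + I_{V_{c−1}} = I_{V_c}^{(2)}. -/
open MvPolynomial

noncomputable section

namespace StarHelper

set_option linter.unusedVariables false

variable {k : Type*} [Field k] {n : ℕ}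

def lf (v : Fin (n+1) → k) : MvPolynomial (Fin (n+1)) k := ∑ i, C (v i) * X i

lemma lf_add (v w : Fin (n+1) → k) : lf (v + w) = lf v + lf w := by
  simp [lf, add_mul, Finset.sum_add_distrib]

lemma lf_smul (a : k) (v : Fin (n+1) → k) : lf (a • v) = C a * lf v := by
  simp [lf, Finset.mul_sum, mul_assoc]

def lfₗ : (Fin (n+1) → k) →ₗ[k] MvPolynomial (Fin (n+1)) k where
  toFun := lf
  map_add' := lf_add
  map_smul' := fun a v => by simp [lf_smul, smul_eq_C_mul]

lemma lf_sum {α : Type*} (t : Finset α) (g : α → (Fin (n+1) → k)) :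
    lf (∑ x ∈ t, g x) = ∑ x ∈ t, lf (g x) :=
  map_sum lfₗ g t

lemma lf_sub (v w : Fin (n+1) → k) : lf (v - w) = lf v - lf w := by
  simp [lf, sub_mul, Finset.sum_sub_distrib]

lemma lf_zero : lf (0 : Fin (n+1) → k) = 0 := by simp [lf]

def cf (p : MvPolynomial (Fin (n+1)) k) (i : Fin (n+1)) : k :=
  coeff (Finsupp.single i 1) p

lemma lf_single (i : Fin (n+1)) : lf (Pi.single i (1:k)) = X i := by
  rw [lf, Finset.sum_eq_single i]
  · simp
  · intro j _ hj
    simp [Pi.single_apply, hj]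
  · simp

lemma cf_lf (v : Fin (n+1) → k) : cf (lf v) = v := by
  funext i
  simp only [cf, lf, coeff_sum, coeff_C_mul, coeff_X']
  rw [Finset.sum_eq_single i]
  · simp
  · intro j _ hj
    have : ¬ (Finsupp.single j 1 = Finsupp.single i (1:ℕ)) := by
      simp [Finsupp.single_eq_single_iff, hj]
    simp [this]
  · simp

lemma lf_isHomogeneous (v : Fin (n+1) → k) : (lf v).IsHomogeneous 1 := by
  apply MvPolynomial.IsHomogeneous.sum
  intro i _
  simpa using (isHomogeneous_C (Fin (n+1)) (v i)).mul (isHomogeneous_X k i)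

lemma degree_one_single {m : Fin (n+1) →₀ ℕ} (hm : Finsupp.degree m = 1) :
    ∃ i, m = Finsupp.single i 1 := by
  have hne : m ≠ 0 := by
    intro h; rw [h] at hm; simp [map_zero] at hm
  obtain ⟨i, hi⟩ := Finsupp.support_nonempty_iff.mpr hne
  have hsum : ∑ j ∈ m.support, m j = 1 := hm
  have hrw : ∑ j ∈ m.support.erase i, m j + m i = 1 := by
    rw [Finset.sum_erase_add _ _ hi]; exact hsum
  have hmi : 1 ≤ m i := Nat.one_le_iff_ne_zero.mpr (Finsupp.mem_support_iff.mp hi)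
  have h0 : ∑ j ∈ m.support.erase i, m j = 0 := by omega
  have hmi1 : m i = 1 := by omega
  refine ⟨i, ?_⟩
  ext j
  rcases eq_or_ne j i with rfl | hj
  · simp [hmi1]
  · rw [Finsupp.single_apply, if_neg (Ne.symm hj)]
    by_cases hjs : j ∈ m.support
    · exact (Finset.sum_eq_zero_iff.mp h0) j (Finset.mem_erase.mpr ⟨hj, hjs⟩)
    · exact Finsupp.notMem_support_iff.mp hjs

lemma lf_cf {p : MvPolynomial (Fin (n+1)) k} (hp : p.IsHomogeneous 1) :
    lf (cf p) = p := by
  ext m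
  simp only [lf, coeff_sum, coeff_C_mul, coeff_X']
  by_cases hm : ∃ i, m = Finsupp.single i 1
  · obtain ⟨i, rfl⟩ := hm
    rw [Finset.sum_eq_single i]
    · simp [cf]
    · intro j _ hj
      have : ¬ (Finsupp.single j 1 = Finsupp.single i (1:ℕ)) := by
        simp [Finsupp.single_eq_single_iff, hj]
      simp [this]
    · simp
  · have hz : coeff m p = 0 := by
      by_contra hc
      have := hp hc
      rw [show (1 : Fin (n+1) → ℕ) = fun _ => 1 from rfl, ← Finsupp.degree_eq_weight_one] at this
      obtain ⟨i, hi⟩ := degree_one_single this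
      exact hm ⟨i, hi⟩
    rw [hz]
    apply Finset.sum_eq_zero
    intro j _
    have : ¬ (Finsupp.single j 1 = m) := fun h => hm ⟨j, h.symm⟩
    simp [this]


lemma lf_injective : Function.Injective (lf (k := k) (n := n)) := by
  intro v w h
  rw [← cf_lf v, ← cf_lf w, h]

/-- existence of an idempotent endomorphism with kernel W -/
lemma exists_proj (W : Submodule k (Fin (n+1) → k)) :
    ∃ f : (Fin (n+1) → k) →ₗ[k] (Fin (n+1) → k),
      (∀ x, f x = 0 ↔ x ∈ W) ∧ (∀ x, f (f x) = f x) := by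
  obtain ⟨U, hU⟩ := W.exists_isCompl
  refine ⟨U.subtype.comp (Submodule.linearProjOfIsCompl U W hU.symm), fun x => ?_, fun x => ?_⟩
  · simp only [LinearMap.comp_apply, Submodule.subtype_apply, Submodule.coe_eq_zero]
    exact Submodule.linearProjOfIsCompl_apply_eq_zero_iff hU.symm
  · simp only [LinearMap.comp_apply, Submodule.subtype_apply]
    congr 1
    exact Submodule.linearProjOfIsCompl_apply_left hU.symm _

/-- the retraction of the polynomial ring induced by `f` -/
def piMap (f : (Fin (n+1) → k) →ₗ[k] (Fin (n+1) → k)) :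
    MvPolynomial (Fin (n+1)) k →ₐ[k] MvPolynomial (Fin (n+1)) k :=
  aeval (fun i => lf (f (Pi.single i 1)))

lemma piMap_lf (f : (Fin (n+1) → k) →ₗ[k] (Fin (n+1) → k)) (v : Fin (n+1) → k) :
    piMap f (lf v) = lf (f v) := by
  have hv : v = ∑ i, v i • (Pi.single i (1:k) : Fin (n+1) → k) := by
    ext j
    simp [Pi.single_apply, Finset.sum_ite_eq]
  rw [piMap, lf, map_sum]
  conv_rhs => rw [hv, map_sum]
  rw [lf_sum]
  apply Finset.sum_congr rfl
  intro i _
  rw [map_mul, aeval_C, aeval_X, map_smul, lf_smul, algebraMap_eq]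

lemma piMap_isHomogeneous (f : (Fin (n+1) → k) →ₗ[k] (Fin (n+1) → k))
    {p : MvPolynomial (Fin (n+1)) k} {m : ℕ} (hp : p.IsHomogeneous m) :
    (piMap f p).IsHomogeneous m := by
  have h := hp.aeval (fun i => lf (f (Pi.single i 1))) (fun i => lf_isHomogeneous _)
  rw [one_mul] at h; exact h

lemma piMap_idem (f : (Fin (n+1) → k) →ₗ[k] (Fin (n+1) → k))
    (hff : ∀ x, f (f x) = f x) (p : MvPolynomial (Fin (n+1)) k) :
    piMap f (piMap f p) = piMap f p := by
  have : (piMap f).comp (piMap f) = piMap f := by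
    apply MvPolynomial.algHom_ext
    intro i
    simp only [AlgHom.comp_apply, piMap, aeval_X]
    rw [show (aeval fun i => lf (f (Pi.single i 1))) (lf (f (Pi.single i (1:k))))
        = piMap f (lf (f (Pi.single i 1))) from rfl, piMap_lf, hff]
  exact congrArg (fun g => g p) (congrArg (fun (h : _ →ₐ[k] _) => h.toFun) this)

/-- members of W give linear forms in the span -/
lemma lf_mem_span (M : Set (MvPolynomial (Fin (n+1)) k)) (hM : ∀ p ∈ M, p.IsHomogeneous 1)
    {w : Fin (n+1) → k} (hw : w ∈ Submodule.span k (cf '' M)) :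
    lf w ∈ Ideal.span M := by
  induction hw using Submodule.span_induction with
  | mem x hx =>
      obtain ⟨p, hp, rfl⟩ := hx
      rw [lf_cf (hM p hp)]
      exact Ideal.subset_span hp
  | zero => rw [lf_zero]; exact zero_mem _
  | add x y _ _ hx hy => rw [lf_add]; exact add_mem hx hy
  | smul a x _ hx => rw [lf_smul]; exact Ideal.mul_mem_left _ _ hx

lemma sub_piMap_mem (M : Set (MvPolynomial (Fin (n+1)) k)) (hM : ∀ p ∈ M, p.IsHomogeneous 1)
    (f : (Fin (n+1) → k) →ₗ[k] (Fin (n+1) → k))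
    (hf0 : ∀ x, f x = 0 ↔ x ∈ Submodule.span k (cf '' M))
    (hff : ∀ x, f (f x) = f x)
    (p : MvPolynomial (Fin (n+1)) k) : p - piMap f p ∈ Ideal.span M := by
  induction p using MvPolynomial.induction_on with
  | C a => simp only [piMap, aeval_C, algebraMap_eq, sub_self]; exact zero_mem _
  | add p q hp hq =>
      have : p + q - piMap f (p + q) = (p - piMap f p) + (q - piMap f q) := by
        rw [map_add]; ring
      rw [this]; exact add_mem hp hq
  | mul_X p i hp =>
      have hXi : X i - piMap f (X i) ∈ Ideal.span M := by
        have : piMap f (X i) = lf (f (Pi.single i 1)) := by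
          simp [piMap]
        rw [this, ← lf_single i, ← lf_sub]
        apply lf_mem_span M hM
        rw [← hf0]
        rw [map_sub, hff, sub_self]
      have : p * X i - piMap f (p * X i)
          = (p - piMap f p) * X i + piMap f p * (X i - piMap f (X i)) := by
        rw [map_mul]; ring
      rw [this]
      exact add_mem (Ideal.mul_mem_right _ _ hp) (Ideal.mul_mem_left _ _ hXi)


lemma mem_span_iff_piMap (M : Set (MvPolynomial (Fin (n+1)) k))
    (hM : ∀ p ∈ M, p.IsHomogeneous 1)
    (f : (Fin (n+1) → k) →ₗ[k] (Fin (n+1) → k))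
    (hf0 : ∀ x, f x = 0 ↔ x ∈ Submodule.span k (cf '' M))
    (hff : ∀ x, f (f x) = f x)
    (p : MvPolynomial (Fin (n+1)) k) : p ∈ Ideal.span M ↔ piMap f p = 0 := by
  constructor
  · intro hp
    have hle : Ideal.span M ≤ RingHom.ker (piMap f).toRingHom := by
      rw [Ideal.span_le]
      intro q hq
      have h1 : piMap f q = lf (f (cf q)) := by
        conv_lhs => rw [← lf_cf (hM q hq)]
        exact piMap_lf f (cf q)
      have h2 : f (cf q) = 0 := by
        rw [hf0]
        exact Submodule.subset_span ⟨q, hq, rfl⟩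
      simpa [h1, h2, lf_zero] using rfl
    exact hle hp
  · intro hp
    have := sub_piMap_mem M hM f hf0 hff p
    rwa [hp, sub_zero] at this

lemma span_isPrime (M : Set (MvPolynomial (Fin (n+1)) k))
    (hM : ∀ p ∈ M, p.IsHomogeneous 1) : (Ideal.span M).IsPrime := by
  obtain ⟨f, hf0, hff⟩ := exists_proj (Submodule.span k (cf '' M))
  have : Ideal.span M = RingHom.ker (piMap f).toRingHom := by
    ext p
    rw [RingHom.mem_ker]
    exact mem_span_iff_piMap M hM f hf0 hff p
  rw [this]
  exact RingHom.ker_isPrime _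

lemma prime_of_homog1 {p : MvPolynomial (Fin (n+1)) k} (hp : p.IsHomogeneous 1)
    (hp0 : p ≠ 0) : Prime p := by
  rw [← Ideal.span_singleton_prime hp0]
  have := span_isPrime {p} (by rintro q rfl; exact hp)
  simpa using this

lemma prod_pow_dvd {ι : Type*} [DecidableEq ι] (t : Finset ι)
    (p : ι → MvPolynomial (Fin (n+1)) k) (e : ℕ)
    (hp : ∀ i ∈ t, Prime (p i))
    (hnd : ∀ i ∈ t, ∀ j ∈ t, i ≠ j → ¬ p i ∣ p j)
    {x : MvPolynomial (Fin (n+1)) k}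
    (hd : ∀ i ∈ t, p i ^ e ∣ x) : (∏ i ∈ t, p i ^ e) ∣ x := by
  induction t using Finset.induction_on generalizing x with
  | empty => simpa using one_dvd x
  | @insert a t ha ih =>
      obtain ⟨y, hy⟩ := hd a (Finset.mem_insert_self a t)
      rw [Finset.prod_insert ha, hy]
      apply mul_dvd_mul_left
      apply ih
      · intro i hi; exact hp i (Finset.mem_insert_of_mem hi)
      · intro i hi j hj hij
        exact hnd i (Finset.mem_insert_of_mem hi) j (Finset.mem_insert_of_mem hj) hij
      · intro i hi
        have hia : i ≠ a := fun h => ha (h ▸ hi)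
        have h1 : p i ^ e ∣ p a ^ e * y := hy ▸ hd i (Finset.mem_insert_of_mem hi)
        have h2 : ¬ p i ∣ p a ^ e := by
          intro h
          exact hnd i (Finset.mem_insert_of_mem hi) a (Finset.mem_insert_self a t) hia
            ((hp i (Finset.mem_insert_of_mem hi)).dvd_of_dvd_pow h)
        exact (hp i (Finset.mem_insert_of_mem hi)).pow_dvd_of_dvd_mul_left e h2 h1

lemma eq_C_of_homog_mul {a b : MvPolynomial (Fin (n+1)) k} {d : ℕ}
    (ha : a.IsHomogeneous d) (hab : (a * b).IsHomogeneous d) (h0 : a * b ≠ 0) :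
    ∃ u : k, u ≠ 0 ∧ b = C u := by
  have ha0 : a ≠ 0 := fun h => h0 (by rw [h, zero_mul])
  have hb0 : b ≠ 0 := fun h => h0 (by rw [h, mul_zero])
  -- every nonzero homogeneous component of b must sit in degree 0
  have key : ∀ e, e ≠ 0 → homogeneousComponent e b = 0 := by
    intro e he
    by_contra hbe
    have hhom : (a * homogeneousComponent e b).IsHomogeneous (d + e) :=
      ha.mul (homogeneousComponent_isHomogeneous e b)
    have habe : a * homogeneousComponent e b ≠ 0 := mul_ne_zero ha0 hbe
    -- a * b_e is the (d+e)-homogeneous component of a*b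
    have hsum : a * b = ∑ e' ∈ Finset.range (b.totalDegree + 1),
        a * homogeneousComponent e' b := by
      rw [← Finset.mul_sum, sum_homogeneousComponent]
    have hcomp : homogeneousComponent (d + e) (a * b) = a * homogeneousComponent e b := by
      by_cases het : e ∈ Finset.range (b.totalDegree + 1)
      · rw [hsum, map_sum]
        rw [Finset.sum_eq_single e]
        · exact homogeneousComponent_of_mem
            (ha.mul (homogeneousComponent_isHomogeneous e b)) |>.trans (if_pos rfl)
        · intro e' _ hee
          rw [homogeneousComponent_of_mem (ha.mul (homogeneousComponent_isHomogeneous e' b)),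
            if_neg (by omega)]
        · intro h; exact absurd het h
      · exfalso
        apply hbe
        apply homogeneousComponent_eq_zero
        simp only [Finset.mem_range, not_lt] at het
        omega
    have hzero : homogeneousComponent (d + e) (a * b) = 0 := by
      rw [homogeneousComponent_of_mem (p := a*b) (by exact hab), if_neg (by omega)]
    rw [hcomp] at hzero
    exact habe hzero
  have hb : b = C (coeff 0 b) := by
    conv_lhs => rw [← sum_homogeneousComponent b]
    rw [Finset.sum_eq_single 0]
    · exact homogeneousComponent_zero b
    · intro e _ he; exact key e he
    · intro h; simp at h
  refine ⟨coeff 0 b, ?_, hb⟩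
  intro h
  rw [h, map_zero] at hb
  exact hb0 hb


lemma lf_eq_zero {v : Fin (n+1) → k} (h : lf v = 0) : v = 0 := by
  rw [← cf_lf v, h]
  funext i; simp [cf]

section Config

variable {s : ℕ} (L : Fin s → MvPolynomial (Fin (n+1)) k)

def PS (S : Finset (Fin s)) : Ideal (MvPolynomial (Fin (n+1)) k) :=
  Ideal.span (L '' ↑S)

def WS (S : Finset (Fin s)) : Submodule k (Fin (n+1) → k) :=
  Submodule.span k (cf '' (L '' ↑S))

variable {L}

lemma PS_homog (hL : MeetProperly L) (S : Finset (Fin s)) :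
    ∀ p ∈ L '' ↑S, p.IsHomogeneous 1 := by
  rintro p ⟨i, _, rfl⟩; exact hL.1 i

lemma vec_notMem (hL : MeetProperly L) {S : Finset (Fin s)} {j : Fin s}
    (hj : j ∉ S) (hcard : S.card + 1 ≤ n + 1) :
    cf (L j) ∉ WS L S := by
  set T : Finset (Fin s) := insert j S with hT
  have hTcard : T.card = S.card + 1 := Finset.card_insert_of_notMem hj
  have hTle : T.card ≤ min s (n + 1) := by
    refine le_min ?_ (by omega)
    simpa using Finset.card_le_univ T
  have hLI : LinearIndependent k (fun i : T => L i) := hL.2 T hTle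
  have hLIv : LinearIndependent k (fun i : T => cf (L i)) := by
    apply LinearIndependent.of_comp lfₗ
    have : (lfₗ ∘ fun i : T => cf (L i)) = fun i : T => L i := by
      funext i
      exact lf_cf (hL.1 i)
    rw [this]
    exact hLI
  have hx : (⟨j, Finset.mem_insert_self j S⟩ : T) ∉ {i : T | (i : Fin s) ∈ S} := by
    simp [hj]
  have hnot := hLIv.notMem_span_image hx
  intro hmem
  apply hnot
  have him : (fun i : T => cf (L i)) '' {i : T | (i : Fin s) ∈ S} = cf '' (L '' ↑S) := by
    rw [Set.image_image]
    ext w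
    constructor
    · rintro ⟨i, hiS, rfl⟩
      exact ⟨(i : Fin s), hiS, rfl⟩
    · rintro ⟨a, haS, rfl⟩
      exact ⟨⟨a, Finset.mem_insert_of_mem haS⟩, haS, rfl⟩
  rw [him]
  exact hmem

lemma LnotMem_PS (hL : MeetProperly L) {S : Finset (Fin s)} {j : Fin s}
    (hj : j ∉ S) (hcard : S.card + 1 ≤ n + 1) :
    L j ∉ PS L S := by
  obtain ⟨f, hf0, hff⟩ := exists_proj (WS L S)
  intro h
  have h0 := (mem_span_iff_piMap _ (PS_homog hL S) f hf0 hff (L j)).mp h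
  have h1 : piMap f (L j) = lf (f (cf (L j))) := by
    conv_lhs => rw [← lf_cf (hL.1 j)]
    exact piMap_lf f _
  rw [h1] at h0
  have h2 : f (cf (L j)) = 0 := lf_eq_zero h0
  exact vec_notMem hL hj hcard ((hf0 _).mp h2)

lemma not_dvd_piMap (hL : MeetProperly L) {S : Finset (Fin s)}
    (f : (Fin (n+1) → k) →ₗ[k] (Fin (n+1) → k))
    (hf0 : ∀ x, f x = 0 ↔ x ∈ WS L S) (hff : ∀ x, f (f x) = f x)
    {j j' : Fin s} (hj : j ∉ S) (hj' : j' ∉ S) (hjj : j ≠ j')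
    (hcard : S.card + 2 ≤ n + 1) :
    ¬ (piMap f (L j) ∣ piMap f (L j')) := by
  intro hdvd
  set N := piMap f (L j) with hN
  have hNhom : N.IsHomogeneous 1 := piMap_isHomogeneous f (hL.1 j)
  obtain ⟨f', hf0', hff'⟩ := exists_proj (Submodule.span k (cf '' ({N} : Set _)))
  have hmem : piMap f (L j') ∈ Ideal.span ({N} : Set _) := Ideal.mem_span_singleton.mpr hdvd
  have h0 := (mem_span_iff_piMap {N} (by rintro q rfl; exact hNhom) f' hf0' hff' _).mp hmem
  have hj'eq : piMap f (L j') = lf (f (cf (L j'))) := by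
    conv_lhs => rw [← lf_cf (hL.1 j')]
    exact piMap_lf f _
  rw [hj'eq, piMap_lf] at h0
  have h2 : f' (f (cf (L j'))) = 0 := lf_eq_zero h0
  have h3 : f (cf (L j')) ∈ Submodule.span k (cf '' ({N} : Set _)) := (hf0' _).mp h2
  rw [Set.image_singleton] at h3
  obtain ⟨t, ht⟩ := Submodule.mem_span_singleton.mp h3
  have hcfN : cf N = f (cf (L j)) := by
    have : N = lf (f (cf (L j))) := by
      conv_lhs => rw [hN, ← lf_cf (hL.1 j)]
      exact piMap_lf f _
    rw [this, cf_lf]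
  rw [hcfN] at ht
  have h4 : f (cf (L j') - t • cf (L j)) = 0 := by
    rw [map_sub, map_smul, ht, sub_self]
  have h5 : cf (L j') - t • cf (L j) ∈ WS L S := (hf0 _).mp h4
  -- contradiction with vec_notMem applied to insert j S
  have hj'mem : cf (L j') ∈ WS L (insert j S) := by
    have himg : cf '' (L '' ↑(insert j S)) = insert (cf (L j)) (cf '' (L '' ↑S)) := by
      rw [Finset.coe_insert, Set.image_insert_eq, Set.image_insert_eq]
    rw [WS, himg, Submodule.span_insert]
    have : cf (L j') = (t • cf (L j)) + (cf (L j') - t • cf (L j)) := by ring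
    rw [this]
    apply Submodule.add_mem
    · exact Submodule.mem_sup_left (Submodule.smul_mem _ t (Submodule.mem_span_singleton_self _))
    · exact Submodule.mem_sup_right h5
  have hj'notin : j' ∉ insert j S := by
    simp [Finset.mem_insert, hj', Ne.symm hjj]
  exact vec_notMem hL hj'notin
    (by rw [Finset.card_insert_of_notMem hj]; omega) hj'mem

lemma mem_insert_sq {S : Finset (Fin s)} {j : Fin s}
    {x : MvPolynomial (Fin (n+1)) k} (hx : x ∈ (PS L (insert j S)) ^ 2) :
    ∃ p a, p ∈ PS L S ∧ x = p + a * (L j) ^ 2 := by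
  have hsp : PS L (insert j S) = Ideal.span {L j} ⊔ PS L S := by
    rw [PS, Finset.coe_insert, Set.image_insert_eq, Ideal.span_insert]; rfl
  have hle : (PS L (insert j S)) ^ 2 ≤ PS L S ⊔ Ideal.span {(L j) ^ 2} := by
    rw [hsp, pow_two, Submodule.sup_mul, Submodule.mul_sup, Submodule.mul_sup]
    refine sup_le (sup_le ?_ ?_) (sup_le ?_ ?_)
    · rw [Ideal.span_singleton_mul_span_singleton, ← pow_two]
      exact le_sup_right
    · exact le_trans Ideal.mul_le_right le_sup_left
    · exact le_trans Ideal.mul_le_left le_sup_left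
    · exact le_trans Ideal.mul_le_right le_sup_left
  obtain ⟨p, hp, y, hy, hxy⟩ := Submodule.mem_sup.mp (hle hx)
  obtain ⟨a, ha⟩ := Ideal.mem_span_singleton'.mp hy
  exact ⟨p, a, hp, by rw [← hxy, ← ha]⟩

lemma mem_insert_lin {S : Finset (Fin s)} {j : Fin s}
    {x : MvPolynomial (Fin (n+1)) k} (hx : x ∈ PS L (insert j S)) :
    ∃ p a, p ∈ PS L S ∧ x = p + a * L j := by
  have hsp : PS L (insert j S) = Ideal.span {L j} ⊔ PS L S := by
    rw [PS, Finset.coe_insert, Set.image_insert_eq, Ideal.span_insert]; rfl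
  rw [hsp, sup_comm] at hx
  obtain ⟨p, hp, y, hy, hxy⟩ := Submodule.mem_sup.mp hx
  obtain ⟨a, ha⟩ := Ideal.mem_span_singleton'.mp hy
  exact ⟨p, a, hp, by rw [← hxy, ← ha]⟩



lemma key_step (hL : MeetProperly L) {c : ℕ} (hc1 : 2 ≤ c) (hc2 : c ≤ min s n)
    {S : Finset (Fin s)} (hS : S.card = c - 1)
    {G F : MvPolynomial (Fin (n+1)) k}
    (hG : ∀ j ∉ S, G ∈ (PS L (insert j S)) ^ 2)
    (hFdeg : F.IsHomogeneous (s - c + 1))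
    (hFS : F ∉ PS L S)
    (hFc : ∀ j ∉ S, F ∈ PS L (insert j S)) :
    ∃ (q : MvPolynomial (Fin (n+1)) k) (u : k), u ≠ 0 ∧ G - (∏ j ∈ Sᶜ, L j) ^ 2 * q ∈ PS L S ∧
      F - C u * (∏ j ∈ Sᶜ, L j) ∈ PS L S := by
  have hcs : c ≤ s := le_trans hc2 (min_le_left _ _)
  have hcn : c ≤ n := le_trans hc2 (min_le_right _ _)
  obtain ⟨f, hf0, hff⟩ := exists_proj (WS L S)
  have hf0' : ∀ x, f x = 0 ↔ x ∈ Submodule.span k (cf '' (L '' ↑S)) := hf0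
  have hmem : ∀ p, p ∈ PS L S ↔ piMap f p = 0 :=
    mem_span_iff_piMap (L '' ↑S) (PS_homog hL S) f hf0' hff
  set π : MvPolynomial (Fin (n+1)) k →ₐ[k] MvPolynomial (Fin (n+1)) k := piMap f with hπ
  set N : Fin s → MvPolynomial (Fin (n+1)) k := fun j => π (L j) with hNdef
  have hNfix : ∀ j, π (N j) = N j := fun j => piMap_idem f hff (L j)
  have hNhom : ∀ j, (N j).IsHomogeneous 1 := fun j => piMap_isHomogeneous f (hL.1 j)
  have hN0 : ∀ j ∈ Sᶜ, N j ≠ 0 := by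
    intro j hj hNj
    have hjS : j ∉ S := Finset.mem_compl.mp hj
    exact LnotMem_PS hL hjS (by omega) ((hmem (L j)).mpr hNj)
  have hprime : ∀ j ∈ Sᶜ, Prime (N j) := fun j hj => prime_of_homog1 (hNhom j) (hN0 j hj)
  have hnd : ∀ j ∈ Sᶜ, ∀ j' ∈ Sᶜ, j ≠ j' → ¬ N j ∣ N j' := by
    intro j hj j' hj' hjj
    exact not_dvd_piMap hL f hf0 hff (Finset.mem_compl.mp hj) (Finset.mem_compl.mp hj') hjj
      (by omega)
  have hdvd2 : ∀ j ∈ Sᶜ, N j ^ 2 ∣ π G := by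
    intro j hj
    obtain ⟨p, a, hp, hxe⟩ := mem_insert_sq (hG j (Finset.mem_compl.mp hj))
    refine ⟨π a, ?_⟩
    rw [hxe, map_add, map_mul, map_pow, (hmem p).mp hp, zero_add, mul_comm]
  obtain ⟨h, hh⟩ := prod_pow_dvd Sᶜ N 2 hprime hnd hdvd2
  have hdvd1 : ∀ j ∈ Sᶜ, N j ^ 1 ∣ π F := by
    intro j hj
    obtain ⟨p, a, hp, hxe⟩ := mem_insert_lin (hFc j (Finset.mem_compl.mp hj))
    refine ⟨π a, ?_⟩
    rw [hxe, map_add, map_mul, (hmem p).mp hp, zero_add, mul_comm, pow_one]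
  obtain ⟨w, hw⟩ := prod_pow_dvd Sᶜ N 1 hprime hnd hdvd1
  simp only [pow_one] at hw
  have hπF0 : π F ≠ 0 := fun h0 => hFS ((hmem F).mpr h0)
  have hccard : Sᶜ.card = s - c + 1 := by
    rw [Finset.card_compl, Fintype.card_fin, hS]
    omega
  have hprodhom : (∏ j ∈ Sᶜ, N j).IsHomogeneous (s - c + 1) := by
    have := MvPolynomial.IsHomogeneous.prod Sᶜ N (fun _ => 1) (fun j _ => hNhom j)
    simpa [hccard] using this
  have hFwhom : ((∏ j ∈ Sᶜ, N j) * w).IsHomogeneous (s - c + 1) := by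
    rw [← hw]; exact piMap_isHomogeneous f hFdeg
  obtain ⟨u, hu0, hwu⟩ := eq_C_of_homog_mul hprodhom hFwhom (by rw [← hw]; exact hπF0)
  have hπprod : π (∏ j ∈ Sᶜ, L j) = ∏ j ∈ Sᶜ, N j := by rw [map_prod]
  have hπG : π G = (∏ j ∈ Sᶜ, N j) ^ 2 * π h := by
    have := congrArg π hh
    rw [piMap_idem f hff, map_mul, map_prod] at this
    simp only [map_pow, hNfix] at this
    rw [this, Finset.prod_pow]
  refine ⟨π h, u, hu0, ?_, ?_⟩
  · rw [hmem]
    rw [map_sub, map_mul, map_pow, hπprod, piMap_idem f hff, hπG, sub_self]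
  · rw [hmem]
    have hCu : π (C u) = C u := by
      rw [← algebraMap_eq]
      exact (piMap f).commutes u
    rw [map_sub, map_mul, hπprod, hCu, hw, hwu, mul_comm, sub_self]


lemma L_mem_PS {S : Finset (Fin s)} {j : Fin s} (hj : j ∈ S) : L j ∈ PS L S :=
  Ideal.subset_span ⟨j, hj, rfl⟩

lemma FS_mem {S T : Finset (Fin s)} (h : ¬ T ⊆ S) : (∏ j ∈ Sᶜ, L j) ∈ PS L T := by
  obtain ⟨j, hjT, hjS⟩ := Finset.not_subset.mp h
  rw [← Finset.mul_prod_erase Sᶜ L (Finset.mem_compl.mpr hjS)]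
  exact Ideal.mul_mem_right _ _ (L_mem_PS hjT)

lemma Ic1_le (hL : MeetProperly L) {c : ℕ} (hc1 : 2 ≤ c) (hc2 : c ≤ min s n)
    {T : Finset (Fin s)} (hT : T.card = c) :
    (⨅ (S : Finset (Fin s)) (_ : S.card = c - 1), PS L S) ≤ (PS L T) ^ 2 := by
  classical
  have hcs : c ≤ s := le_trans hc2 (min_le_left _ _)
  have hcn : c ≤ n := le_trans hc2 (min_le_right _ _)
  intro x hx
  have hmem : ∀ S : Finset (Fin s), S.card = c - 1 → x ∈ PS L S := by
    intro S hS
    exact (Submodule.mem_iInf _).mp ((Submodule.mem_iInf _).mp hx S) hS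
  -- x ∈ PS L T
  obtain ⟨t₀, ht₀⟩ := Finset.card_pos.mp (by omega : 0 < T.card)
  have hxT : x ∈ PS L T := by
    have h1 : x ∈ PS L (T.erase t₀) := hmem _ (by rw [Finset.card_erase_of_mem ht₀, hT])
    exact Ideal.span_mono (Set.image_mono (by exact_mod_cast Finset.erase_subset t₀ T)) h1
  -- representation
  have hLI : LinearIndependent k (fun i : T => L i) := by
    apply hL.2 T
    refine le_min ?_ (by omega)
    simpa using Finset.card_le_univ T
  have hinj : ∀ a ∈ T, ∀ b ∈ T, L a = L b → a = b := by
    intro a ha b hb hab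
    have h2 := hLI.injective (show L ↑(⟨a, ha⟩ : T) = L ↑(⟨b, hb⟩ : T) from hab)
    exact congrArg Subtype.val h2
  have himg : (L '' ↑T) = ↑(T.image L) := by rw [Finset.coe_image]
  rw [PS, himg] at hxT
  obtain ⟨g, -, hg⟩ := Submodule.mem_span_finset.mp hxT
  rw [Finset.sum_image hinj] at hg
  -- each coefficient is in PS L (T.erase t)
  have hcoef : ∀ t ∈ T, g (L t) ∈ PS L T := by
    intro t ht
    have hprime : (PS L (T.erase t)).IsPrime := span_isPrime _ (PS_homog hL _)
    have herase : T.erase t ⊆ T := Finset.erase_subset t T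
    have hrep : g (L t) • L t = x - ∑ a ∈ T.erase t, g (L a) • L a := by
      rw [← hg, ← Finset.sum_erase_add T _ ht]; ring
    have hmul : g (L t) • L t ∈ PS L (T.erase t) := by
      rw [hrep]
      apply Submodule.sub_mem
      · exact hmem _ (by rw [Finset.card_erase_of_mem ht, hT])
      · apply Submodule.sum_mem
        intro a ha
        rw [smul_eq_mul]
        exact Ideal.mul_mem_left _ _ (L_mem_PS ha)
    rw [smul_eq_mul] at hmul
    rcases hprime.mem_or_mem hmul with h | h
    · exact Ideal.span_mono (Set.image_mono (by exact_mod_cast herase)) h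
    · exact absurd h (LnotMem_PS hL (Finset.notMem_erase t T)
        (by rw [Finset.card_erase_of_mem ht, hT]; omega))
  rw [← hg]
  apply Submodule.sum_mem
  intro t ht
  rw [smul_eq_mul, pow_two]
  exact Ideal.mul_mem_mul (hcoef t ht) (L_mem_PS ht)


end Config
end StarHelper

open StarHelper

/-- Basic double linkage description of the symbolic square of a star configuration ideal. -/
theorem star_symbolic_square_eq_basic_double_link {k : Type*} [Field k] [Infinite k] {n s c : ℕ}
    (L : Fin s → MvPolynomial (Fin (n + 1)) k) (hL : MeetProperly L)
    (hs : 1 ≤ s) (hc1 : 2 ≤ c) (hc2 : c ≤ min s n)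
    (F : MvPolynomial (Fin (n + 1)) k)
    (hFdeg : F.IsHomogeneous (s - c + 1))
    (hFmem : F ∈ starIdeal L c)
    (hFnv : ∀ T : Finset (Fin s), T.card = c - 1 → F ∉ Ideal.span (L '' ↑T)) :
    Ideal.span {F} * starIdeal L c + starIdeal L (c - 1) = starSymbolic L c 2 := by
  have hL' : MeetProperly L := hL
  have hcs : c ≤ s := le_trans hc2 (min_le_left _ _)
  have hcn : c ≤ n := le_trans hc2 (min_le_right _ _)
  have hFPT : ∀ T : Finset (Fin s), T.card = c → F ∈ PS L T := by
    intro T hT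
    exact (Submodule.mem_iInf _).mp ((Submodule.mem_iInf _).mp hFmem T) hT
  apply le_antisymm
  · -- easy inclusion
    rw [Submodule.add_eq_sup]
    apply sup_le
    · apply le_iInf; intro T; apply le_iInf; intro hT
      rw [pow_two]
      apply Ideal.mul_mono
      · rw [Ideal.span_le, Set.singleton_subset_iff]
        exact hFPT T hT
      · exact iInf₂_le T hT
    · apply le_iInf; intro T; apply le_iInf; intro hT
      exact Ic1_le hL' hc1 hc2 hT
  · -- hard inclusion
    intro G hG
    set FS : Finset (Fin s) → MvPolynomial (Fin (n+1)) k := fun S => ∏ j ∈ Sᶜ, L j with hFS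
    have key : ∀ S : Finset (Fin s), ∃ (q : MvPolynomial (Fin (n+1)) k) (u : k), u ≠ 0 ∧
        (S.card = c - 1 → (G - FS S ^ 2 * q ∈ PS L S ∧ F - C u * FS S ∈ PS L S)) := by
      intro S
      by_cases hS : S.card = c - 1
      · have hGj : ∀ j ∉ S, G ∈ (PS L (insert j S)) ^ 2 := by
          intro j hj
          have hcard : (insert j S).card = c := by
            rw [Finset.card_insert_of_notMem hj, hS]; omega
          exact (Submodule.mem_iInf _).mp ((Submodule.mem_iInf _).mp hG (insert j S)) hcard
        have hFj : ∀ j ∉ S, F ∈ PS L (insert j S) := by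
          intro j hj
          apply hFPT
          rw [Finset.card_insert_of_notMem hj, hS]; omega
        obtain ⟨q, u, hu, hA, hB⟩ := key_step hL' hc1 hc2 hS hGj hFdeg (hFnv S hS) hFj
        exact ⟨q, u, hu, fun _ => ⟨hA, hB⟩⟩
      · exact ⟨0, 1, one_ne_zero, fun h => absurd h hS⟩
    choose q u hu hcond using key
    set 𝒮 : Finset (Finset (Fin s)) :=
      Finset.univ.filter (fun S : Finset (Fin s) => S.card = c - 1) with h𝒮
    have h𝒮card : ∀ S ∈ 𝒮, S.card = c - 1 := by
      intro S hS; exact (Finset.mem_filter.mp hS).2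
    have hFSmem : ∀ (S : Finset (Fin s)), S.card = c - 1 →
        ∀ (T : Finset (Fin s)), ¬ T ⊆ S → FS S ∈ PS L T := fun S _ T h => FS_mem h
    -- decomposition identity
    have hGdecomp : G = (∑ S ∈ 𝒮, F * (C (u S)⁻¹ * (FS S * q S))) +
        ((∑ S ∈ 𝒮, (FS S - C (u S)⁻¹ * F) * (FS S * q S)) +
          (G - ∑ S ∈ 𝒮, FS S ^ 2 * q S)) := by
      have hterm : ∀ S, F * (C (u S)⁻¹ * (FS S * q S)) +
          (FS S - C (u S)⁻¹ * F) * (FS S * q S) = FS S ^ 2 * q S := by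
        intro S; ring
      rw [← add_assoc, ← Finset.sum_add_distrib]
      rw [Finset.sum_congr rfl (fun S _ => hterm S)]
      ring
    rw [hGdecomp, Submodule.add_eq_sup]
    apply Submodule.add_mem_sup
    · -- first sum in span{F} * starIdeal L c
      apply Ideal.sum_mem
      intro S hS
      apply Ideal.mul_mem_mul (Ideal.mem_span_singleton_self F)
      rw [starIdeal]
      apply (Submodule.mem_iInf _).mpr; intro T
      apply (Submodule.mem_iInf _).mpr; intro hT
      have hTS : ¬ T ⊆ S := by
        intro hsub
        have := Finset.card_le_card hsub
        rw [hT, h𝒮card S hS] at this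
        omega
      exact Ideal.mul_mem_left _ _ (Ideal.mul_mem_right _ _ (hFSmem S (h𝒮card S hS) T hTS))
    · apply Submodule.add_mem
      · -- second sum in starIdeal L (c-1)
        apply Ideal.sum_mem
        intro S hS
        rw [starIdeal]
        apply (Submodule.mem_iInf _).mpr; intro S'
        apply (Submodule.mem_iInf _).mpr; intro hS'
        by_cases hSS : S = S'
        · subst hSS
          have hB := (hcond S (h𝒮card S hS)).2
          have h1 : C (u S)⁻¹ * C (u S) = (1 : MvPolynomial (Fin (n+1)) k) := by
            rw [← map_mul, inv_mul_cancel₀ (hu S), map_one]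
          have heq : FS S - C (u S)⁻¹ * F = (-(C (u S)⁻¹)) * (F - C (u S) * FS S) := by
            linear_combination (-(FS S)) * h1
          rw [heq]
          exact Ideal.mul_mem_right _ _ (Ideal.mul_mem_left _ _ hB)
        · have hsub : ¬ S' ⊆ S := by
            intro hsub
            exact hSS (Finset.eq_of_subset_of_card_le hsub
              (by rw [h𝒮card S hS, hS']) ).symm
          exact Ideal.mul_mem_left _ _
            (Ideal.mul_mem_right _ _ (hFSmem S (h𝒮card S hS) S' hsub))
      · -- last term in starIdeal L (c-1)
        rw [starIdeal]
        apply (Submodule.mem_iInf _).mpr; intro S'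
        apply (Submodule.mem_iInf _).mpr; intro hS'
        have hS'mem : S' ∈ 𝒮 := by
          rw [h𝒮]; exact Finset.mem_filter.mpr ⟨Finset.mem_univ _, hS'⟩
        have hsplit : ∑ S ∈ 𝒮, FS S ^ 2 * q S =
            (∑ S ∈ 𝒮.erase S', FS S ^ 2 * q S) + FS S' ^ 2 * q S' :=
          (Finset.sum_erase_add 𝒮 _ hS'mem).symm
        have hre : G - ∑ S ∈ 𝒮, FS S ^ 2 * q S =
            (G - FS S' ^ 2 * q S') - ∑ S ∈ 𝒮.erase S', FS S ^ 2 * q S := by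
          rw [hsplit]; ring
        rw [hre]
        apply Submodule.sub_mem
        · exact ((hcond S' hS').1)
        · apply Ideal.sum_mem
          intro S hSe
          have hSne : S ≠ S' := (Finset.mem_erase.mp hSe).1
          have hSin : S ∈ 𝒮 := (Finset.mem_erase.mp hSe).2
          have hsub : ¬ S' ⊆ S := by
            intro hsub
            exact hSne (Finset.eq_of_subset_of_card_le hsub
              (by rw [h𝒮card S hSin, hS'])).symm
          exact Ideal.mul_mem_right _ _ ((pow_two (FS S)) ▸
            Ideal.mul_mem_right _ _ (hFSmem S (h𝒮card S hSin) S' hsub))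
end
end
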